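/- arXiv:1011.5530 — 7 statements merged into one kernel-verified Lean document; each statement's English description precedes it below -/
import Mathlib

section
/- Let S ⊆ ℤ² be nonempty and such that the sum of S and T is direct and S ⊕ T is lattice-convex. Then the graph G_S is connected. -/
open scoped Pointwise ENNReal

noncomputable section

abbrev Z2 : Type := ℤ × ℤ
abbrev R2 : Type := ℝ × ℝ

/-- The canonical embedding of `ℤ²` into `ℝ²`. -/
def toR (p : Z2) : R2 := ((p.1 : ℝ), (p.2 : ℝ))

/-- The standard scalar product on `ℝ²`. -/
def dotR (x y : R2) : ℝ := x.1 * y.1 + x.2 * y.2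

/-- The covariogram of a set `K ⊆ ℤ²`: `u ↦ |K ∩ (K + u)|`. -/
def cov (K : Set Z2) (u : Z2) : ℕ := (K ∩ ((fun x => x + u) '' K)).ncard

/-- `K ⊆ ℤ²` is lattice-convex if it is the intersection of `ℤ²` with a convex set. -/
def latticeConvex (K : Set Z2) : Prop := ∃ C : Set R2, Convex ℝ C ∧ K = toR ⁻¹' C

/-- The affine hull of `K` is all of `ℝ²`. -/
def spans (K : Set Z2) : Prop := affineSpan ℝ (toR '' K) = ⊤

/-- `L ∈ [K]`: `L` is a translate of `K` or a translate of `−K`. -/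
def sameClass (K L : Set Z2) : Prop :=
  ∃ t : Z2, L = (fun x => x + t) '' K ∨ L = (fun x => t - x) '' K

/-- The support set `F(K,u)` of `K` in direction `u ∈ ℝ²`. -/
def suppSet (K : Set Z2) (u : R2) : Set Z2 :=
  {x ∈ K | ∀ y ∈ K, dotR (toR y) u ≤ dotR (toR x) u}

/-- A vector of `ℤ²` is primitive if the gcd of its coordinates is `1`. -/
def primitive (u : Z2) : Prop := Int.gcd u.1 u.2 = 1

/-- `u ≠ 0` is an outer normal of an edge of `K` if `F(K,u)` has more than one point. -/
def isEdge (K : Set Z2) (u : Z2) : Prop := u ≠ 0 ∧ 1 < (suppSet K (toR u)).ncard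

/-- `U(K)`: primitive outer normals of edges of `K`. -/
def normals (K : Set Z2) : Set Z2 := {u | primitive u ∧ isEdge K u}

/-- `−K`. -/
def negSet (K : Set Z2) : Set Z2 := (fun x => -x) '' K

/-- `m'(K) = min {|F(K,u)| : u ∈ U(K)}` (with `min ∅ = ∞`). -/
def mOne (K : Set Z2) : ℝ≥0∞ := ⨅ u ∈ normals K, ((suppSet K (toR u)).ncard : ℝ≥0∞)

/-- `m''(K) = min {|F(K,u)| − |F(K,−u)| + 1 : u ≠ 0, |F(K,u)| > |F(K,−u)| > 1}`. -/
def mTwo (K : Set Z2) : ℝ≥0∞ :=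
  ⨅ u ∈ {u : Z2 | u ≠ 0 ∧ 1 < (suppSet K (toR (-u))).ncard ∧
      (suppSet K (toR (-u))).ncard < (suppSet K (toR u)).ncard},
    (((suppSet K (toR u)).ncard - (suppSet K (toR (-u))).ncard + 1 : ℕ) : ℝ≥0∞)

/-- `m(K) = min {m'(K), m''(K)}`. -/
def mm (K : Set Z2) : ℝ≥0∞ := min (mOne K) (mTwo K)

/-- Determinant of the 2×2 matrix with columns `u`, `v`. -/
def detZ (u v : Z2) : ℤ := u.1 * v.2 - u.2 * v.1

/-- `D(U) = {|det(u₁,u₂)| : u₁, u₂ ∈ U} \ {0}`. -/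
def Dset (U : Set Z2) : Set ℝ≥0∞ :=
  {d | d ≠ 0 ∧ ∃ u ∈ U, ∃ v ∈ U, d = ((detZ u v).natAbs : ℝ≥0∞)}

/-- The discrepancy `δ(U) = max D(U) / min D(U)`. -/
def disc (U : Set Z2) : ℝ≥0∞ := sSup (Dset U) / sInf (Dset U)

/-- `δ(K) = δ(U(K))`. -/
def discK (K : Set Z2) : ℝ≥0∞ := disc (normals K)

/-- Two vectors of `ℝ²` are parallel (linearly dependent). -/
def Parallel2 (x w : R2) : Prop := x.1 * w.2 = x.2 * w.1

/-- Two vectors of `ℤ²` are parallel (linearly dependent). -/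
def ParallelZ (u v : Z2) : Prop := u.1 * v.2 = u.2 * v.1

/-- A polyhedron in `ℝ²`: an intersection of finitely many closed halfplanes. -/
def IsPolyhedron (P : Set R2) : Prop :=
  ∃ H : Finset (R2 × ℝ), P = ⋂ h ∈ H, {x : R2 | dotR x h.1 ≤ h.2}

/-- `E` is an edge (one-dimensional face) of the polyhedron `P`:
a convex extreme subset of `P` with at least two points that is contained in a line. -/
def IsPolyEdge (P E : Set R2) : Prop :=
  IsExtreme ℝ P E ∧ Convex ℝ E ∧ (∃ p ∈ E, ∃ q ∈ E, p ≠ q) ∧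
    ∃ a d : R2, ∀ x ∈ E, ∃ t : ℝ, x = a + t • d

/-- Every edge of `P` is parallel to some vector of `W`. -/
def edgesParallelTo (P : Set R2) (W : Set Z2) : Prop :=
  ∀ E : Set R2, IsPolyEdge P E → ∃ w ∈ W, ∀ p ∈ E, ∀ q ∈ E, Parallel2 (p - q) (toR w)

/-- `u` is parallel to an edge of the convex hull of `K`. -/
def parEdgeHull (K : Set Z2) (u : Z2) : Prop :=
  ∃ E : Set R2, IsPolyEdge (convexHull ℝ (toR '' K)) E ∧
    ∀ p ∈ E, ∀ q ∈ E, Parallel2 (p - q) (toR u)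

/-- The conical hull of a set in `ℝ²`. -/
def coneHull (s : Set R2) : Set R2 :=
  {x | ∃ c : ℝ, 0 ≤ c ∧ ∃ y ∈ convexHull ℝ s, x = c • y}

/-- The supporting cone `S(K,v) = cone (K − v)`. -/
def suppCone (K : Set Z2) (v : Z2) : Set R2 :=
  coneHull ((fun x => toR x - toR v) '' K)

/-- `v` is a vertex of `K`: a support set of `K` consisting of exactly one point. -/
def isVertex (K : Set Z2) (v : Z2) : Prop := ∃ u : R2, u ≠ 0 ∧ suppSet K u = {v}

/-- A set is centrally symmetric if it is a translate of its reflection. -/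
def centSym (A : Set Z2) : Prop := ∃ t : Z2, A = (fun x => t - x) '' A

/-- The Minkowski sum of `S` and `T` is direct. -/
def directSum (S T : Set Z2) : Prop :=
  ∀ s ∈ S, ∀ s' ∈ S, ∀ t ∈ T, ∀ t' ∈ T, s + t = s' + t' → s = s' ∧ t = t'

/-- `T₁ = {0,…,k} × {0}`. -/
def T1set (k : ℤ) : Set Z2 := {p | 0 ≤ p.1 ∧ p.1 ≤ k ∧ p.2 = 0}

/-- `T₂ = {0,…,ℓ} × {1}`. -/
def T2set (l : ℤ) : Set Z2 := {p | 0 ≤ p.1 ∧ p.1 ≤ l ∧ p.2 = 1}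

/-- `T = ({0,…,k} × {0}) ∪ ({0,…,ℓ} × {1})`. -/
def Tset (k l : ℤ) : Set Z2 := T1set k ∪ T2set l

def wOne (k : ℤ) : Z2 := (-k - 1, 1)
def wTwo (l : ℤ) : Z2 := (l + 1, 1)

/-- The lattice `𝕃 = ℤw₁ + ℤw₂`. -/
def ZLat (k l : ℤ) : Set Z2 := {p | ∃ a b : ℤ, p = a • wOne k + b • wTwo l}

/-- `S` is lattice-convex with respect to the lattice `Λ`. -/
def latticeConvexIn (Λ S : Set Z2) : Prop := ∃ C : Set R2, Convex ℝ C ∧ S = Λ ∩ toR ⁻¹' C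

/-- The translate `s + A`. -/
def transl (s : Z2) (A : Set Z2) : Set Z2 := (fun x => s + x) '' A

/-- The horizontal section `I_h` of `K` at height `h`. -/
def sect (K : Set Z2) (h : ℤ) : Set Z2 := {p ∈ K | p.2 = h}

/-- `𝒯(h)`: the members of `𝒯₁ ∪ 𝒯₂` contained in `I_h`. -/
def TcalSet (k l : ℤ) (S : Set Z2) (h : ℤ) : Set (Set Z2) :=
  {J | (∃ s ∈ S, J = transl s (T1set k) ∨ J = transl s (T2set l)) ∧ J ⊆ sect (S + Tset k l) h}

/-- `J` strictly precedes `J'` in the left-to-right order. -/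
def precedes (J J' : Set Z2) : Prop := ∀ p ∈ J, ∀ q ∈ J', p.1 < q.1

/-- Adjacency in the graph `G_S`. -/
def adjStep (k l : ℤ) (S : Set Z2) (a b : Z2) : Prop :=
  a ∈ S ∧ b ∈ S ∧
    (b - a = wOne k ∨ b - a = -(wOne k) ∨ b - a = wTwo l ∨ b - a = -(wTwo l) ∨
      (k = l + 1 ∧ (b - a = wOne k + wTwo l ∨ b - a = -(wOne k + wTwo l))))

/-- The graph `G_S` is connected. -/
def GConnected (k l : ℤ) (S : Set Z2) : Prop :=
  ∀ s ∈ S, ∀ s' ∈ S, Relation.ReflTransGen (adjStep k l S) s s'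

end

/-! ### Auxiliary machinery for `graph_connected` -/

namespace GCAux

/-- `s` covers the lattice point `(x,m)` via its translate of `T`. -/
def owns (k l : ℤ) (s : Z2) (x m : ℤ) : Prop :=
  (m = s.2 ∧ s.1 ≤ x ∧ x ≤ s.1 + k) ∨ (m = s.2 + 1 ∧ s.1 ≤ x ∧ x ≤ s.1 + l)

lemma memK_iff {k l : ℤ} {S : Set Z2} {x m : ℤ} :
    ((x, m) : Z2) ∈ S + Tset k l ↔ ∃ s ∈ S, owns k l s x m := by
  rw [Set.mem_add]
  constructor
  · rintro ⟨s, hs, t, ht, hst⟩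
    have h1 : s.1 + t.1 = x := by
      have := congrArg Prod.fst hst; simpa using this
    have h2 : s.2 + t.2 = m := by
      have := congrArg Prod.snd hst; simpa using this
    simp only [Tset, T1set, T2set, Set.mem_union, Set.mem_setOf_eq] at ht
    rcases ht with ⟨a0, a1, a2⟩ | ⟨a0, a1, a2⟩
    · exact ⟨s, hs, Or.inl ⟨by omega, by omega, by omega⟩⟩
    · exact ⟨s, hs, Or.inr ⟨by omega, by omega, by omega⟩⟩
  · rintro ⟨s, hs, h | h⟩
    · obtain ⟨h0, h1, h2⟩ := h
      refine ⟨s, hs, (x - s.1, 0), ?_, ?_⟩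
      · simp only [Tset, T1set, T2set, Set.mem_union, Set.mem_setOf_eq]
        exact Or.inl ⟨by omega, by omega, trivial⟩
      · apply Prod.ext <;> simp <;> omega
    · obtain ⟨h0, h1, h2⟩ := h
      refine ⟨s, hs, (x - s.1, 1), ?_, ?_⟩
      · simp only [Tset, T1set, T2set, Set.mem_union, Set.mem_setOf_eq]
        exact Or.inr ⟨by omega, by omega, trivial⟩
      · apply Prod.ext <;> simp <;> omega

lemma owner_unique {k l : ℤ} {S : Set Z2} (hdir : directSum S (Tset k l)) {s s' : Z2} {x m : ℤ}
    (hs : s ∈ S) (hs' : s' ∈ S) (h : owns k l s x m) (h' : owns k l s' x m) : s = s' := by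
  have key : ∀ σ : Z2, owns k l σ x m → ∃ t ∈ Tset k l, σ + t = ((x, m) : Z2) := by
    intro σ hσ
    rcases hσ with ⟨h0, h1, h2⟩ | ⟨h0, h1, h2⟩
    · refine ⟨(x - σ.1, 0), ?_, ?_⟩
      · simp only [Tset, T1set, T2set, Set.mem_union, Set.mem_setOf_eq]
        exact Or.inl ⟨by omega, by omega, trivial⟩
      · apply Prod.ext <;> simp <;> omega
    · refine ⟨(x - σ.1, 1), ?_, ?_⟩
      · simp only [Tset, T1set, T2set, Set.mem_union, Set.mem_setOf_eq]
        exact Or.inr ⟨by omega, by omega, trivial⟩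
      · apply Prod.ext <;> simp <;> omega
  obtain ⟨t, ht, hts⟩ := key s h
  obtain ⟨t', ht', hts'⟩ := key s' h'
  exact (hdir s hs s' hs' t ht t' ht' (hts.trans hts'.symm)).1

end GCAux

/-- if the sum of `S` and `T` is direct and `S ⊕ T` is lattice-convex,
then the graph `G_S` is connected. -/
theorem graph_connected
    (k l : ℤ) (hl : 0 ≤ l) (hkl : l < k)
    (S : Set Z2) (hSne : S.Nonempty) (hdir : directSum S (Tset k l))
    (hconv : latticeConvex (S + Tset k l)) :
    GConnected k l S := by
  classical
  obtain ⟨C, hC, hKC⟩ := hconv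
  have hk1 : (1:ℤ) ≤ k := by omega
  -- basic membership lemmas
  have hmemK : ∀ s ∈ S, ∀ x m : ℤ, GCAux.owns k l s x m → ((x, m) : Z2) ∈ S + Tset k l :=
    fun s hs x m h => GCAux.memK_iff.2 ⟨s, hs, h⟩
  have huniq : ∀ s ∈ S, ∀ s' ∈ S, ∀ x m : ℤ,
      GCAux.owns k l s x m → GCAux.owns k l s' x m → s = s' :=
    fun s hs s' hs' x m h h' => GCAux.owner_unique hdir hs hs' h h'
  -- convexity helpers
  have hmemC : ∀ x m : ℤ, ((x, m) : Z2) ∈ S + Tset k l → (((x : ℝ), (m : ℝ)) : R2) ∈ C := by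
    intro x m h; rw [hKC] at h; exact h
  have hCmem : ∀ x m : ℤ, (((x : ℝ), (m : ℝ)) : R2) ∈ C → ((x, m) : Z2) ∈ S + Tset k l := by
    intro x m h; rw [hKC]; exact h
  have hseg : ∀ u v : R2, u ∈ C → v ∈ C → ∀ t : ℝ, 0 ≤ t → t ≤ 1 → (1 - t) • u + t • v ∈ C := by
    intro u v hu hv t h0 h1
    exact hC hu hv (by linarith) h0 (by ring)
  have hhor : ∀ a b x r : ℝ, ((a, r) : R2) ∈ C → ((b, r) : R2) ∈ C → a ≤ x → x ≤ b →
      ((x, r) : R2) ∈ C := by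
    intro a b x r ha hb hax hxb
    rcases eq_or_lt_of_le (hax.trans hxb) with h | h
    · have hxa : x = a := le_antisymm (h ▸ hxb) hax
      rwa [hxa]
    · have hba : (0:ℝ) < b - a := by linarith
      set t : ℝ := (x - a) / (b - a) with htdef
      have h0 : 0 ≤ t := div_nonneg (by linarith) (by linarith)
      have h1 : t ≤ 1 := (div_le_one hba).2 (by linarith)
      have htb : t * (b - a) = x - a := div_mul_cancel₀ _ (ne_of_gt hba)
      have hmem := hseg _ _ ha hb t h0 h1
      have heq : (1 - t) • ((a, r) : R2) + t • ((b, r) : R2) = ((x, r) : R2) := by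
        simp only [Prod.smul_mk, Prod.mk_add_mk, smul_eq_mul, Prod.mk.injEq]
        exact ⟨by linear_combination htb, by ring⟩
      rwa [heq] at hmem
  have hrow : ∀ a b x m : ℤ, ((a, m) : Z2) ∈ S + Tset k l → ((b, m) : Z2) ∈ S + Tset k l →
      a ≤ x → x ≤ b → ((x, m) : Z2) ∈ S + Tset k l := by
    intro a b x m h1 h2 hax hxb
    exact hCmem x m (hhor a b x m (hmemC a m h1) (hmemC b m h2)
      (by exact_mod_cast hax) (by exact_mod_cast hxb))
  have hcross : ∀ a a' q m z : ℤ, ((a, m) : Z2) ∈ S + Tset k l →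
      ((a', m) : Z2) ∈ S + Tset k l → ((q, m + 2) : Z2) ∈ S + Tset k l →
      a + q ≤ 2 * z → 2 * z ≤ a' + q → ((z, m + 1) : Z2) ∈ S + Tset k l := by
    intro a a' q m z h1 h2 h3 hb1 hb2
    have hP : ((((2 * z - q : ℤ) : ℝ), ((m : ℤ) : ℝ)) : R2) ∈ C := by
      refine hhor a a' _ m (hmemC a m h1) (hmemC a' m h2) ?_ ?_
      · exact_mod_cast (show a ≤ 2 * z - q by omega)
      · exact_mod_cast (show 2 * z - q ≤ a' by omega)
    have hmem := hseg _ _ hP (hmemC q (m + 2) h3) (1/2) (by norm_num) (by norm_num)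
    have heq : ((1 : ℝ) - 1/2) • ((((2 * z - q : ℤ) : ℝ), ((m : ℤ) : ℝ)) : R2)
        + (1/2 : ℝ) • ((((q : ℤ) : ℝ), (((m + 2 : ℤ)) : ℝ)) : R2)
        = (((z : ℝ), ((m + 1 : ℤ) : ℝ)) : R2) := by
      simp only [Prod.smul_mk, Prod.mk_add_mk, smul_eq_mul, Prod.mk.injEq]
      constructor <;> (push_cast; ring)
    rw [heq] at hmem
    exact hCmem z (m + 1) hmem
  have hsecV : ∀ a h b h' j : ℤ, ((a, h) : Z2) ∈ S + Tset k l →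
      ((a + 1, h) : Z2) ∈ S + Tset k l → ((b, h') : Z2) ∈ S + Tset k l →
      ((b + 1, h') : Z2) ∈ S + Tset k l → h < j → j < h' →
      ∃ x : ℤ, ((x, j) : Z2) ∈ S + Tset k l := by
    intro a h b h' j h1 h2 h3 h4 hj1 hj2
    have hd : (0:ℝ) < (h' : ℝ) - (h : ℝ) := by
      have : h < h' := hj1.trans hj2
      push_cast; exact_mod_cast sub_pos.2 (by exact_mod_cast this)
    set t : ℝ := ((j : ℝ) - (h : ℝ)) / ((h' : ℝ) - (h : ℝ)) with htdef
    have h0 : 0 ≤ t := div_nonneg (by push_cast; exact_mod_cast sub_nonneg.2 (by exact_mod_cast hj1.le)) hd.le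
    have h1t : t ≤ 1 := (div_le_one hd).2 (by
      have : (j:ℝ) ≤ (h':ℝ) := by exact_mod_cast hj2.le
      linarith)
    have htm : t * ((h' : ℝ) - (h : ℝ)) = (j : ℝ) - (h : ℝ) := div_mul_cancel₀ _ hd.ne'
    set c : ℝ := (1 - t) * (a : ℝ) + t * (b : ℝ) with hcdef
    have hc1 : ((c, (j : ℝ)) : R2) ∈ C := by
      have hmem := hseg _ _ (hmemC a h h1) (hmemC b h' h3) t h0 h1t
      have heq : (1 - t) • (((a : ℝ), (h : ℝ)) : R2) + t • (((b : ℝ), (h' : ℝ)) : R2)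
          = ((c, (j : ℝ)) : R2) := by
        simp only [Prod.smul_mk, Prod.mk_add_mk, smul_eq_mul, Prod.mk.injEq]
        exact ⟨by simp [hcdef], by linear_combination htm⟩
      rwa [heq] at hmem
    have hc2 : ((c + 1, (j : ℝ)) : R2) ∈ C := by
      have hmem := hseg _ _ (hmemC (a+1) h h2) (hmemC (b+1) h' h4) t h0 h1t
      have heq : (1 - t) • ((((a + 1 : ℤ) : ℝ), (h : ℝ)) : R2)
          + t • ((((b + 1 : ℤ) : ℝ), (h' : ℝ)) : R2) = ((c + 1, (j : ℝ)) : R2) := by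
        simp only [Prod.smul_mk, Prod.mk_add_mk, smul_eq_mul, Prod.mk.injEq]
        constructor
        · rw [hcdef]; push_cast; ring
        · linear_combination htm
      rwa [heq] at hmem
    refine ⟨⌈c⌉, hCmem _ _ ?_⟩
    exact hhor c (c + 1) _ _ hc1 hc2 (Int.le_ceil c) (by linarith [Int.ceil_lt_add_one c])
  -- separation of same-row tiles
  have hT1sep : ∀ s ∈ S, ∀ s' ∈ S, s.2 = s'.2 → s.1 < s'.1 → s.1 + k + 1 ≤ s'.1 := by
    intro s hs s' hs' hh hlt
    by_contra hcon
    push_neg at hcon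
    have h1 : GCAux.owns k l s s'.1 s.2 := Or.inl ⟨rfl, by omega, by omega⟩
    have h2 : GCAux.owns k l s' s'.1 s.2 := Or.inl ⟨by omega, le_rfl, by omega⟩
    have := huniq s hs s' hs' s'.1 s.2 h1 h2
    subst this
    exact absurd hlt (lt_irrefl _)
  -- no two adjacent T1 tiles in a row
  have hnoT1T1 : ∀ s ∈ S, ∀ s' ∈ S, s.2 = s'.2 → s'.1 = s.1 + k + 1 → False := by
    intro s hs s' hs' hh he
    have hp1 : ((s.1 + l, s.2 + 1) : Z2) ∈ S + Tset k l :=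
      hmemK s hs _ _ (Or.inr ⟨rfl, by omega, by omega⟩)
    have hp2 : ((s.1 + k + 1, s.2 + 1) : Z2) ∈ S + Tset k l :=
      hmemK s' hs' _ _ (Or.inr ⟨by omega, by omega, by omega⟩)
    have hmid : ((s.1 + l + 1, s.2 + 1) : Z2) ∈ S + Tset k l :=
      hrow (s.1 + l) (s.1 + k + 1) (s.1 + l + 1) (s.2 + 1) hp1 hp2 (by omega) (by omega)
    obtain ⟨τ, hτS, hoτ⟩ := GCAux.memK_iff.1 hmid
    rcases hoτ with ⟨b0, b1, b2⟩ | ⟨b0, b1, b2⟩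
    · -- τ is a T1 tile in row s.2 + 1
      have hy : s.1 + l + 1 ≤ τ.1 := by
        by_contra hcon
        push_neg at hcon
        have hoτ' : GCAux.owns k l τ (s.1 + l) (s.2 + 1) := Or.inl ⟨b0, by omega, by omega⟩
        have hos : GCAux.owns k l s (s.1 + l) (s.2 + 1) := Or.inr ⟨rfl, by omega, by omega⟩
        rw [huniq τ hτS s hs _ _ hoτ' hos] at b0
        omega
      have hoτ2 : GCAux.owns k l τ (s.1 + k + 1) (s.2 + 1) := Or.inl ⟨b0, by omega, by omega⟩
      have hos' : GCAux.owns k l s' (s.1 + k + 1) (s.2 + 1) := Or.inr ⟨by omega, by omega, by omega⟩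
      rw [huniq τ hτS s' hs' _ _ hoτ2 hos'] at b0
      omega
    · -- τ is a T2 tile from row s.2
      have hτs : τ ≠ s := by
        intro h; rw [h] at b2; omega
      have hτgt : s.1 < τ.1 := by omega
      have := hT1sep s hs τ hτS (by omega) hτgt
      omega
  -- the step lemma: the tile right after s's tile in a row
  have step : ∀ s ∈ S, ∀ m x x' : ℤ, GCAux.owns k l s x m →
      ((x', m) : Z2) ∈ S + Tset k l → ¬ GCAux.owns k l s x' m → x ≤ x' →
      ∃ τ, τ ∈ S ∧ adjStep k l S s τ ∧ GCAux.owns k l τ τ.1 m ∧ x < τ.1 ∧ τ.1 ≤ x' := by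
    intro s hs m x x' ho hx'K hno hxx
    rcases ho with ⟨hm, h1, h2⟩ | ⟨hm, h1, h2⟩
    · -- s's tile in row m is [s.1, s.1+k]
      have hx' : s.1 + k < x' := by
        by_contra hcon
        push_neg at hcon
        exact hno (Or.inl ⟨hm, by omega, by omega⟩)
      have hmemE : ((s.1 + k + 1, m) : Z2) ∈ S + Tset k l :=
        hrow x x' (s.1 + k + 1) m (hmemK s hs x m (Or.inl ⟨hm, h1, h2⟩)) hx'K
          (by omega) (by omega)
      obtain ⟨τ, hτS, hoτ⟩ := GCAux.memK_iff.1 hmemE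
      have hτstart : τ.1 = s.1 + k + 1 := by
        by_contra hne
        have hoτ' : GCAux.owns k l τ (s.1 + k) m := by
          rcases hoτ with ⟨b0, b1, b2⟩ | ⟨b0, b1, b2⟩
          · exact Or.inl ⟨b0, by omega, by omega⟩
          · exact Or.inr ⟨b0, by omega, by omega⟩
        have hτs : τ = s := huniq τ hτS s hs _ _ hoτ' (Or.inl ⟨hm, by omega, by omega⟩)
        subst hτs
        rcases hoτ with ⟨b0, b1, b2⟩ | ⟨b0, b1, b2⟩ <;> omega
      rcases hoτ with ⟨b0, b1, b2⟩ | ⟨b0, b1, b2⟩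
      · exact (hnoT1T1 s hs τ hτS (by omega) (by omega)).elim
      · -- τ is a T2 tile: step -(w1)
        refine ⟨τ, hτS, ⟨hs, hτS, Or.inr (Or.inl ?_)⟩, Or.inr ⟨b0, le_rfl, by omega⟩,
          by omega, by omega⟩
        apply Prod.ext
        · simp only [Prod.fst_sub, Prod.fst_neg, wOne]; omega
        · simp only [Prod.snd_sub, Prod.snd_neg, wOne]; omega
    · -- s's tile in row m is [s.1, s.1+l]
      have hx' : s.1 + l < x' := by
        by_contra hcon
        push_neg at hcon
        exact hno (Or.inr ⟨hm, by omega, by omega⟩)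
      have hmemE : ((s.1 + l + 1, m) : Z2) ∈ S + Tset k l :=
        hrow x x' (s.1 + l + 1) m (hmemK s hs x m (Or.inr ⟨hm, h1, h2⟩)) hx'K
          (by omega) (by omega)
      obtain ⟨τ, hτS, hoτ⟩ := GCAux.memK_iff.1 hmemE
      have hτstart : τ.1 = s.1 + l + 1 := by
        by_contra hne
        have hoτ' : GCAux.owns k l τ (s.1 + l) m := by
          rcases hoτ with ⟨b0, b1, b2⟩ | ⟨b0, b1, b2⟩
          · exact Or.inl ⟨b0, by omega, by omega⟩
          · exact Or.inr ⟨b0, by omega, by omega⟩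
        have hτs : τ = s := huniq τ hτS s hs _ _ hoτ' (Or.inr ⟨hm, by omega, by omega⟩)
        subst hτs
        rcases hoτ with ⟨b0, b1, b2⟩ | ⟨b0, b1, b2⟩ <;> omega
      rcases hoτ with ⟨b0, b1, b2⟩ | ⟨b0, b1, b2⟩
      · -- τ is a T1 tile: step w2
        refine ⟨τ, hτS, ⟨hs, hτS, Or.inr (Or.inr (Or.inl ?_))⟩,
          Or.inl ⟨b0, le_rfl, by omega⟩, by omega, by omega⟩
        apply Prod.ext
        · simp only [Prod.fst_sub, wTwo]; omega
        · simp only [Prod.snd_sub, wTwo]; omega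
      · -- τ is a T2 tile in the same row as s: contradiction
        have := hT1sep s hs τ hτS (by omega) (by omega)
        omega
  -- connectivity inside a row
  have claimA : ∀ N : ℕ, ∀ s s' : Z2, ∀ x x' m : ℤ, s ∈ S → s' ∈ S →
      GCAux.owns k l s x m → GCAux.owns k l s' x' m → x ≤ x' → x' - x ≤ (N : ℤ) →
      Relation.ReflTransGen (adjStep k l S) s s' := by
    intro N
    induction N with
    | zero =>
      intro s s' x x' m hs hs' ho ho' hxx hN
      have hx : x = x' := by push_cast at hN; omega
      subst hx
      have := huniq s hs s' hs' x m ho ho'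
      rw [this]
    | succ N ih =>
      intro s s' x x' m hs hs' ho ho' hxx hN
      by_cases hss : s = s'
      · rw [hss]
      · have hno : ¬ GCAux.owns k l s x' m := fun h => hss (huniq s hs s' hs' x' m h ho')
        obtain ⟨τ, hτS, hadj, hoτ, hgt, hle⟩ :=
          step s hs m x x' ho (hmemK s' hs' x' m ho') hno hxx
        exact Relation.ReflTransGen.head hadj
          (ih τ s' τ.1 x' m hτS hs' hoτ ho' hle (by push_cast at hN ⊢; omega))
  have hadj_symm : Symmetric (adjStep k l S) := by
    intro a b hab
    obtain ⟨ha, hb, hcase⟩ := hab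
    refine ⟨hb, ha, ?_⟩
    have hneg : a - b = -(b - a) := by ring
    rcases hcase with h | h | h | h | ⟨hk2, h | h⟩
    · exact Or.inr (Or.inl (by rw [hneg, h]))
    · exact Or.inl (by rw [hneg, h, neg_neg])
    · exact Or.inr (Or.inr (Or.inr (Or.inl (by rw [hneg, h]))))
    · exact Or.inr (Or.inr (Or.inl (by rw [hneg, h, neg_neg])))
    · exact Or.inr (Or.inr (Or.inr (Or.inr ⟨hk2, Or.inr (by rw [hneg, h])⟩)))
    · exact Or.inr (Or.inr (Or.inr (Or.inr ⟨hk2, Or.inl (by rw [hneg, h, neg_neg])⟩)))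
  have RTGsymm : ∀ a b : Z2, Relation.ReflTransGen (adjStep k l S) a b →
      Relation.ReflTransGen (adjStep k l S) b a :=
    fun a b h => (@Relation.ReflTransGen.symmetric _ _ ⟨fun x y hxy => hadj_symm hxy⟩).symm _ _ h
  have claimA' : ∀ s s' : Z2, ∀ x x' m : ℤ, s ∈ S → s' ∈ S →
      GCAux.owns k l s x m → GCAux.owns k l s' x' m →
      Relation.ReflTransGen (adjStep k l S) s s' := by
    intro s s' x x' m hs hs' ho ho'
    rcases le_total x x' with h | h
    · exact claimA (x' - x).toNat s s' x x' m hs hs' ho ho' h (Int.self_le_toNat _)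
    · exact RTGsymm _ _ (claimA (x - x').toNat s' s x' x m hs' hs ho' ho h (Int.self_le_toNat _))
  -- a row above an S-free row is a single T2 tile
  have hB1 : ∀ s ∈ S, (∀ σ ∈ S, σ.2 ≠ s.2 + 1) → ∀ z : ℤ,
      ((z, s.2 + 1) : Z2) ∈ S + Tset k l → s.1 ≤ z ∧ z ≤ s.1 + l := by
    intro s hs hemp z hz
    obtain ⟨σ, hσ, hoσ⟩ := GCAux.memK_iff.1 hz
    rcases hoσ with ⟨b0, b1, b2⟩ | ⟨b0, b1, b2⟩
    · exact (hemp σ hσ (by omega)).elim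
    · by_cases hσs : σ = s
      · subst hσs; exact ⟨b1, b2⟩
    -- σ ≠ s, same row s.2
      have hrow2 : σ.2 = s.2 := by omega
      have hne1 : σ.1 ≠ s.1 := by
        intro h; exact hσs (Prod.ext h hrow2)
      rcases lt_or_gt_of_ne hne1 with hltc | hgtc
      · -- σ strictly left of s
        have hsep := hT1sep σ hσ s hs (by omega) hltc
        have hm1 : ((s.1 - 1, s.2 + 1) : Z2) ∈ S + Tset k l :=
          hrow z s.1 (s.1 - 1) (s.2 + 1) hz (hmemK s hs _ _ (Or.inr ⟨rfl, le_rfl, by omega⟩))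
            (by omega) (by omega)
        obtain ⟨τ, hτ, hoτ⟩ := GCAux.memK_iff.1 hm1
        rcases hoτ with ⟨c0, c1, c2⟩ | ⟨c0, c1, c2⟩
        · exact (hemp τ hτ (by omega)).elim
        · have hτs : τ ≠ s := by intro h; rw [h] at c1; omega
          have hτlt : τ.1 < s.1 := by omega
          have := hT1sep τ hτ s hs (by omega) hτlt
          omega
      · -- σ strictly right of s
        have hsep := hT1sep s hs σ hσ (by omega) hgtc
        have hm1 : ((s.1 + l + 1, s.2 + 1) : Z2) ∈ S + Tset k l :=
          hrow (s.1 + l) z (s.1 + l + 1) (s.2 + 1)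
            (hmemK s hs _ _ (Or.inr ⟨rfl, by omega, by omega⟩)) hz (by omega) (by omega)
        obtain ⟨τ, hτ, hoτ⟩ := GCAux.memK_iff.1 hm1
        rcases hoτ with ⟨c0, c1, c2⟩ | ⟨c0, c1, c2⟩
        · exact (hemp τ hτ (by omega)).elim
        · have hτs : τ ≠ s := by intro h; rw [h] at c2; omega
          have hτgt : s.1 < τ.1 := by omega
          have := hT1sep s hs τ hτ (by omega) hτgt
          omega
  -- a row above an S-free row, one farther up, is a single T1 tile
  have hB2 : ∀ τ ∈ S, (∀ σ ∈ S, σ.2 ≠ τ.2 - 1) → ∀ z : ℤ,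
      ((z, τ.2) : Z2) ∈ S + Tset k l → τ.1 ≤ z ∧ z ≤ τ.1 + k := by
    intro τ hτ hemp z hz
    obtain ⟨σ, hσ, hoσ⟩ := GCAux.memK_iff.1 hz
    rcases hoσ with ⟨b0, b1, b2⟩ | ⟨b0, b1, b2⟩
    swap
    · exact (hemp σ hσ (by omega)).elim
    by_cases hστ : σ = τ
    · subst hστ; exact ⟨b1, b2⟩
    have hrow2 : σ.2 = τ.2 := by omega
    have hne1 : σ.1 ≠ τ.1 := by
      intro h; exact hστ (Prod.ext h hrow2)
    rcases lt_or_gt_of_ne hne1 with hltc | hgtc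
    · -- σ strictly left of τ
      have hsep := hT1sep σ hσ τ hτ (by omega) hltc
      have hm1 : ((τ.1 - 1, τ.2) : Z2) ∈ S + Tset k l :=
        hrow z τ.1 (τ.1 - 1) τ.2 hz (hmemK τ hτ _ _ (Or.inl ⟨rfl, le_rfl, by omega⟩))
          (by omega) (by omega)
      obtain ⟨ρ, hρ, hoρ⟩ := GCAux.memK_iff.1 hm1
      rcases hoρ with ⟨c0, c1, c2⟩ | ⟨c0, c1, c2⟩
      · -- ρ is T1 ending at τ.1 - 1 or containing τ.1
        by_cases hend : ρ.1 + k ≥ τ.1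
        · have hoρ' : GCAux.owns k l ρ τ.1 τ.2 := Or.inl ⟨c0, by omega, by omega⟩
          have := huniq ρ hρ τ hτ _ _ hoρ' (Or.inl ⟨rfl, le_rfl, by omega⟩)
          rw [this] at c1; omega
        · exact (hnoT1T1 ρ hρ τ hτ (by omega) (by omega)).elim
      · exact (hemp ρ hρ (by omega)).elim
    · -- σ strictly right of τ
      have hsep := hT1sep τ hτ σ hσ (by omega) hgtc
      have hm1 : ((τ.1 + k + 1, τ.2) : Z2) ∈ S + Tset k l :=
        hrow (τ.1 + k) z (τ.1 + k + 1) τ.2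
          (hmemK τ hτ _ _ (Or.inl ⟨rfl, by omega, by omega⟩)) hz (by omega) (by omega)
      obtain ⟨ρ, hρ, hoρ⟩ := GCAux.memK_iff.1 hm1
      rcases hoρ with ⟨c0, c1, c2⟩ | ⟨c0, c1, c2⟩
      · by_cases hstart : ρ.1 ≤ τ.1 + k
        · have hρ1 : τ.1 + 1 ≤ ρ.1 := by omega
          have hoρ' : GCAux.owns k l ρ ρ.1 τ.2 := Or.inl ⟨c0, le_rfl, by omega⟩
          have hoτ' : GCAux.owns k l τ ρ.1 τ.2 := Or.inl ⟨rfl, by omega, by omega⟩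
          have := huniq ρ hρ τ hτ _ _ hoρ' hoτ'
          rw [this] at hρ1; omega
        · exact (hnoT1T1 τ hτ ρ hρ (by omega) (by omega)).elim
      · exact (hemp ρ hρ (by omega)).elim
  -- the convexity pinch across an S-free row
  have claimB : ∀ s τ : Z2, s ∈ S → τ ∈ S → τ.2 = s.2 + 2 →
      (∀ z : ℤ, ((z, s.2 + 1) : Z2) ∈ S + Tset k l → s.1 ≤ z ∧ z ≤ s.1 + l) →
      (∀ z : ℤ, ((z, s.2 + 2) : Z2) ∈ S + Tset k l → τ.1 ≤ z ∧ z ≤ τ.1 + k) →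
      k = l + 1 ∧ τ.1 = s.1 - 1 := by
    intro s τ hs hτ hτ2 hup hup2
    have key : ∀ z : ℤ, s.1 + τ.1 ≤ 2 * z → 2 * z ≤ s.1 + τ.1 + 2 * k →
        s.1 ≤ z ∧ z ≤ s.1 + l := by
      intro z hz1 hz2
      set q : ℤ := max τ.1 (2 * z - s.1 - k) with hq
      have hq1 : τ.1 ≤ q := le_max_left _ _
      have hq2 : q ≤ τ.1 + k := max_le (by omega) (by omega)
      have hq3 : q ≤ 2 * z - s.1 := max_le (by omega) (by omega)
      have hq4 : 2 * z - s.1 - k ≤ q := le_max_right _ _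
      apply hup
      have hqK : ((q, s.2 + 2) : Z2) ∈ S + Tset k l :=
        hmemK τ hτ _ _ (Or.inl ⟨by omega, hq1, hq2⟩)
      exact hcross s.1 (s.1 + k) q s.2 z
        (hmemK s hs _ _ (Or.inl ⟨rfl, le_rfl, by omega⟩))
        (hmemK s hs _ _ (Or.inl ⟨rfl, by omega, le_rfl⟩)) hqK (by omega) (by omega)
    rcases Int.even_or_odd (s.1 + τ.1) with ⟨c, hc⟩ | ⟨c, hc⟩
    · have h1 := key c (by omega) (by omega)
      have h2 := key (c + k) (by omega) (by omega)
      omega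
    · have h1 := key (c + 1) (by omega) (by omega)
      have h2 := key (c + k) (by omega) (by omega)
      omega
  -- the main vertical induction
  have main : ∀ N : ℕ, ∀ s s' : Z2, s ∈ S → s' ∈ S → s.2 ≤ s'.2 → s'.2 - s.2 ≤ (N : ℤ) →
      Relation.ReflTransGen (adjStep k l S) s s' := by
    intro N
    induction N with
    | zero =>
      intro s s' hs hs' hle hN
      have h0 : s'.2 = s.2 := by push_cast at hN; omega
      exact claimA' s s' s.1 s'.1 s.2 hs hs' (Or.inl ⟨rfl, le_rfl, by omega⟩)
        (Or.inl ⟨h0.symm, le_rfl, by omega⟩)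
    | succ N ih =>
      intro s s' hs hs' hle hN
      by_cases h0 : s'.2 = s.2
      · exact claimA' s s' s.1 s'.1 s.2 hs hs' (Or.inl ⟨rfl, le_rfl, by omega⟩)
          (Or.inl ⟨h0.symm, le_rfl, by omega⟩)
      · have hlt : s.2 < s'.2 := by omega
        by_cases hex : ∃ σ ∈ S, σ.2 = s.2 + 1
        · obtain ⟨σ, hσ, hσ2⟩ := hex
          have r1 : Relation.ReflTransGen (adjStep k l S) s σ :=
            claimA' s σ s.1 σ.1 (s.2 + 1) hs hσ (Or.inr ⟨rfl, le_rfl, by omega⟩)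
              (Or.inl ⟨by omega, le_rfl, by omega⟩)
          have r2 : Relation.ReflTransGen (adjStep k l S) σ s' :=
            ih σ s' hσ hs' (by omega) (by push_cast at hN ⊢; omega)
          exact r1.trans r2
        · push_neg at hex
          have h2lt : s.2 + 2 ≤ s'.2 := by
            have := hex s' hs'; omega
          have hsec2 : ∃ x₂ : ℤ, ((x₂, s.2 + 2) : Z2) ∈ S + Tset k l := by
            by_cases hcase : s'.2 = s.2 + 2
            · exact ⟨s'.1, hmemK s' hs' _ _ (Or.inl ⟨by omega, le_rfl, by omega⟩)⟩
            · exact hsecV s.1 s.2 s'.1 s'.2 (s.2 + 2)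
                (hmemK s hs _ _ (Or.inl ⟨rfl, le_rfl, by omega⟩))
                (hmemK s hs _ _ (Or.inl ⟨rfl, by omega, by omega⟩))
                (hmemK s' hs' _ _ (Or.inl ⟨rfl, le_rfl, by omega⟩))
                (hmemK s' hs' _ _ (Or.inl ⟨rfl, by omega, by omega⟩))
                (by omega) (by omega)
          obtain ⟨x₂, hx₂⟩ := hsec2
          obtain ⟨τ, hτ, hoτ⟩ := GCAux.memK_iff.1 hx₂
          have hτ2 : τ.2 = s.2 + 2 := by
            rcases hoτ with ⟨b0, _, _⟩ | ⟨b0, _, _⟩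
            · omega
            · exact (hex τ hτ (by omega)).elim
          have hup := hB1 s hs hex
          have hup2 : ∀ z : ℤ, ((z, s.2 + 2) : Z2) ∈ S + Tset k l →
              τ.1 ≤ z ∧ z ≤ τ.1 + k := by
            intro z hz
            exact hB2 τ hτ (fun σ hσ => by have := hex σ hσ; omega) z (by rw [hτ2]; exact hz)
          obtain ⟨hk2, hτ1⟩ := claimB s τ hs hτ hτ2 hup hup2
          have hadj : adjStep k l S s τ := by
            refine ⟨hs, hτ, Or.inr (Or.inr (Or.inr (Or.inr ⟨hk2, Or.inl ?_⟩)))⟩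
            apply Prod.ext
            · simp only [Prod.fst_sub, Prod.fst_add, wOne, wTwo]; omega
            · simp only [Prod.snd_sub, Prod.snd_add, wOne, wTwo]; omega
          have r2 : Relation.ReflTransGen (adjStep k l S) τ s' :=
            ih τ s' hτ hs' (by omega) (by push_cast at hN ⊢; omega)
          exact Relation.ReflTransGen.head hadj r2
  -- conclusion
  intro s hs s' hs'
  rcases le_total s.2 s'.2 with h | h
  · exact main (s'.2 - s.2).toNat s s' hs hs' h (Int.self_le_toNat _)
  · exact RTGsymm _ _ (main (s.2 - s'.2).toNat s' s hs' hs h (Int.self_le_toNat _))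
end

section
/- Let S ⊆ ℤ² be nonempty and such that the sum of S and T is direct and S ⊕ T is lattice-convex. If s, s' ∈ S satisfy s − s' = w₂ − w₁, then s' − w₁ ∈ S and s' + w₂ ∈ S. -/
open scoped Pointwise ENNReal

lemma addpair (s : Z2) (x y : ℤ) : s + (x, y) = (s.1 + x, s.2 + y) := rfl

lemma memT1' {k l x y : ℤ} (h0 : 0 ≤ x) (hk : x ≤ k) (hy : y = 0) :
    ((x, y) : Z2) ∈ Tset k l := Or.inl ⟨h0, hk, hy⟩

lemma memT2' {k l x y : ℤ} (h0 : 0 ≤ x) (hk : x ≤ l) (hy : y = 1) :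
    ((x, y) : Z2) ∈ Tset k l := Or.inr ⟨h0, hk, hy⟩

lemma horiz_mem {C : Set R2} (hC : Convex ℝ C) {K : Set Z2} (hK : K = toR ⁻¹' C)
    {a b p : Z2} (ha : a ∈ K) (hb : b ∈ K) (h2a : p.2 = a.2) (h2b : p.2 = b.2)
    (h1 : a.1 ≤ p.1) (h1' : p.1 ≤ b.1) : p ∈ K := by
  rcases eq_or_lt_of_le (h1.trans h1') with he | hab
  · have hpa : p = a := Prod.ext (by omega) h2a
    rwa [hpa]
  subst hK
  have haC : toR a ∈ C := ha
  have hbC : toR b ∈ C := hb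
  set μ : ℝ := ((p.1 - a.1 : ℤ) : ℝ) / ((b.1 - a.1 : ℤ) : ℝ) with hμdef
  have hd : (0:ℝ) < ((b.1 - a.1 : ℤ) : ℝ) := by exact_mod_cast sub_pos.mpr hab
  have hμ0 : 0 ≤ μ := div_nonneg (by exact_mod_cast sub_nonneg.mpr h1) hd.le
  have hμ1 : μ ≤ 1 := by
    rw [div_le_one hd]
    exact_mod_cast sub_le_sub_right h1' a.1
  have key := hC haC hbC (by linarith : (0:ℝ) ≤ 1 - μ) hμ0 (by ring)
  have hmul : μ * ((b.1 - a.1 : ℤ) : ℝ) = ((p.1 - a.1 : ℤ) : ℝ) :=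
    div_mul_cancel₀ _ hd.ne'
  have heq : toR p = (1 - μ) • toR a + μ • toR b := by
    have hfst : (p.1 : ℝ) = (1 - μ) * (a.1 : ℝ) + μ * (b.1 : ℝ) := by
      push_cast at hmul
      linarith [hmul]
    have hsnd : (p.2 : ℝ) = (1 - μ) * (a.2 : ℝ) + μ * (b.2 : ℝ) := by
      have e1 : (p.2 : ℝ) = (a.2 : ℝ) := by exact_mod_cast h2a
      have e2 : (p.2 : ℝ) = (b.2 : ℝ) := by exact_mod_cast h2b
      linear_combination (1 - μ) * e1 + μ * e2
    simp only [toR, Prod.smul_mk, Prod.mk_add_mk, smul_eq_mul, Prod.mk.injEq]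
    exact ⟨hfst, hsnd⟩
  show toR p ∈ C
  rw [heq]
  exact key

lemma dir_eq {S T : Set Z2} (hdir : directSum S T) {σ s' : Z2} (hσ : σ ∈ S) (hs' : s' ∈ S)
    {t t' : Z2} (ht : t ∈ T) (ht' : t' ∈ T) (heq : σ + t = s' + t') :
    σ.1 = s'.1 ∧ σ.2 = s'.2 := by
  have h := (hdir σ hσ s' hs' t ht t' ht' heq).1
  exact ⟨congrArg Prod.fst h, congrArg Prod.snd h⟩

/-- if `s − s' = w₂ − w₁` for `s, s' ∈ S`, then `s' − w₁ ∈ S` and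
`s' + w₂ ∈ S`. -/
theorem neighbor_forced_I
    (k l : ℤ) (hl : 0 ≤ l) (hkl : l < k)
    (S : Set Z2) (hSne : S.Nonempty) (hdir : directSum S (Tset k l))
    (hconv : latticeConvex (S + Tset k l))
    (s s' : Z2) (hs : s ∈ S) (hs' : s' ∈ S)
    (hd : s - s' = wTwo l - wOne k) :
    s' - wOne k ∈ S ∧ s' + wTwo l ∈ S := by
  obtain ⟨C, hC, hKeq⟩ := hconv
  have hk0 : (0:ℤ) ≤ k := by omega
  -- coordinates of s
  have hd1 : s.1 = s'.1 + (k + l + 2) := by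
    have h1 := congrArg Prod.fst hd
    simp only [Prod.fst_sub, wOne, wTwo] at h1
    omega
  have hd2 : s.2 = s'.2 := by
    have h2 := congrArg Prod.snd hd
    simp only [Prod.snd_sub, wOne, wTwo] at h2
    omega
  -- memberships of key points in K = S + T
  have haK : ((s'.1 + k, s'.2) : Z2) ∈ S + Tset k l := by
    have := Set.add_mem_add hs' (memT1' (k := k) (l := l) hk0 le_rfl rfl)
    rwa [addpair, add_zero] at this
  have hbK : ((s'.1 + (k + l + 2), s'.2) : Z2) ∈ S + Tset k l := by
    have := Set.add_mem_add hs (memT1' (k := k) (l := l) le_rfl hk0 rfl)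
    rwa [addpair, add_zero, add_zero, hd1, hd2] at this
  have haK' : ((s'.1 + l, s'.2 + 1) : Z2) ∈ S + Tset k l := by
    have := Set.add_mem_add hs' (memT2' (k := k) (l := l) hl le_rfl rfl)
    rwa [addpair] at this
  have hbK' : ((s'.1 + (k + l + 2), s'.2 + 1) : Z2) ∈ S + Tset k l := by
    have := Set.add_mem_add hs (memT2' (k := k) (l := l) le_rfl hl rfl)
    rwa [addpair, add_zero, hd1, hd2] at this
  -- the two forced points of K
  have hpK : ((s'.1 + (k + 1), s'.2) : Z2) ∈ S + Tset k l :=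
    horiz_mem hC hKeq haK hbK rfl rfl (by dsimp only; omega) (by dsimp only; omega)
  have hqK : ((s'.1 + (l + 1), s'.2 + 1) : Z2) ∈ S + Tset k l :=
    horiz_mem hC hKeq haK' hbK' rfl rfl (by dsimp only; omega) (by dsimp only; omega)
  constructor
  · -- first part : s' - wOne k ∈ S
    rw [Set.mem_add] at hpK
    obtain ⟨σ, hσ, t, ht, hsum⟩ := hpK
    have hc1 : σ.1 + t.1 = s'.1 + (k + 1) := congrArg Prod.fst hsum
    have hc2 : σ.2 + t.2 = s'.2 := congrArg Prod.snd hsum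
    rcases ht with ⟨ht0, htk, ht2⟩ | ⟨ht0, htl, ht2⟩
    · -- t ∈ T1 : impossible
      exfalso
      rcases eq_or_lt_of_le ht0 with h1 | h1
      · -- t.1 = 0 : σ = s' + (k+1,0), then σ + (l+1,0) = s + (0,0)
        have heq2 : σ + ((l + 1 : ℤ), (0:ℤ)) = s + ((0:ℤ), (0:ℤ)) := by
          rw [addpair, addpair]
          exact Prod.ext (by omega) (by omega)
        have := dir_eq hdir hσ hs (memT1' (by omega) (by omega) rfl)
          (memT1' le_rfl hk0 rfl) heq2
        omega
      · -- 1 ≤ t.1 : σ + (0,0) = s' + (k+1-t.1, 0)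
        have heq2 : σ + ((0:ℤ), (0:ℤ)) = s' + ((k + 1 - t.1 : ℤ), (0:ℤ)) := by
          rw [addpair, addpair]
          exact Prod.ext (by omega) (by omega)
        have := dir_eq hdir hσ hs' (memT1' le_rfl hk0 rfl)
          (memT1' (by omega) (by omega) rfl) heq2
        omega
    · -- t ∈ T2
      rcases eq_or_lt_of_le ht0 with h1 | h1
      · -- t.1 = 0 : σ = s' - wOne k
        have hfin : s' - wOne k = σ := by
          simp only [wOne, Prod.ext_iff, Prod.fst_sub, Prod.snd_sub]
          constructor <;> omega
        rwa [hfin]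
      · -- 1 ≤ t.1 : σ + (t.1 - 1, 1) = s' + (k, 0)
        exfalso
        have heq2 : σ + ((t.1 - 1 : ℤ), (1:ℤ)) = s' + ((k:ℤ), (0:ℤ)) := by
          rw [addpair, addpair]
          exact Prod.ext (by omega) (by omega)
        have := dir_eq hdir hσ hs' (memT2' (by omega) (by omega) rfl)
          (memT1' hk0 le_rfl rfl) heq2
        omega
  · -- second part : s' + wTwo l ∈ S
    rw [Set.mem_add] at hqK
    obtain ⟨σ, hσ, t, ht, hsum⟩ := hqK
    have hc1 : σ.1 + t.1 = s'.1 + (l + 1) := congrArg Prod.fst hsum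
    have hc2 : σ.2 + t.2 = s'.2 + 1 := congrArg Prod.snd hsum
    rcases ht with ⟨ht0, htk, ht2⟩ | ⟨ht0, htl, ht2⟩
    · -- t ∈ T1
      rcases eq_or_lt_of_le ht0 with h1 | h1
      · -- t.1 = 0 : σ = s' + wTwo l
        have hfin : s' + wTwo l = σ := by
          simp only [wTwo, Prod.ext_iff, Prod.fst_add, Prod.snd_add]
          constructor <;> omega
        rwa [hfin]
      · exfalso
        rcases le_or_gt t.1 (l + 1) with h2 | h2
        · -- 1 ≤ t.1 ≤ l+1 : σ + (0,0) = s' + (l+1-t.1, 1)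
          have heq2 : σ + ((0:ℤ), (0:ℤ)) = s' + ((l + 1 - t.1 : ℤ), (1:ℤ)) := by
            rw [addpair, addpair]
            exact Prod.ext (by omega) (by omega)
          have := dir_eq hdir hσ hs' (memT1' le_rfl hk0 rfl)
            (memT2' (by omega) (by omega) rfl) heq2
          omega
        · -- t.1 ≥ l+2 : σ + (t.1 - l - 1, 0) = s' + (0, 1)
          have heq2 : σ + ((t.1 - l - 1 : ℤ), (0:ℤ)) = s' + ((0:ℤ), (1:ℤ)) := by
            rw [addpair, addpair]
            exact Prod.ext (by omega) (by omega)
          have := dir_eq hdir hσ hs' (memT1' (by omega) (by omega) rfl)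
            (memT2' le_rfl hl rfl) heq2
          omega
    · -- t ∈ T2 : impossible, σ + (0,0) = s' + (l+1-t.1, 0)
      exfalso
      have heq2 : σ + ((0:ℤ), (0:ℤ)) = s' + ((l + 1 - t.1 : ℤ), (0:ℤ)) := by
        rw [addpair, addpair]
        exact Prod.ext (by omega) (by omega)
      have := dir_eq hdir hσ hs' (memT1' le_rfl hk0 rfl)
        (memT1' (by omega) (by omega) rfl) heq2
      omega
end

section
/- Let k − ℓ > 1 and let S ⊆ ℤ² be nonempty and such that the sum of S and T is direct and S ⊕ T is lattice-convex. If s, s' ∈ S satisfy s − s' = w₁ + w₂, then s' + w₁ ∈ S and s' + w₂ ∈ S. -/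
open scoped Pointwise ENNReal

private lemma midpoint_mem' {K : Set Z2} (h : latticeConvex K) {x y z : Z2}
    (hx : x ∈ K) (hy : y ∈ K) (h1 : 2 * z.1 = x.1 + y.1) (h2 : 2 * z.2 = x.2 + y.2) :
    z ∈ K := by
  obtain ⟨C, hC, rfl⟩ := h
  have c1 : (2:ℝ) * (z.1:ℝ) = (x.1:ℝ) + (y.1:ℝ) := by exact_mod_cast h1
  have c2 : (2:ℝ) * (z.2:ℝ) = (x.2:ℝ) + (y.2:ℝ) := by exact_mod_cast h2
  have hz : toR z = (1/2 : ℝ) • toR x + (1/2 : ℝ) • toR y := by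
    simp only [toR, Prod.smul_mk, Prod.mk_add_mk, smul_eq_mul, Prod.mk.injEq]
    constructor <;> linarith
  show toR z ∈ C
  rw [hz]
  exact hC hx hy (by norm_num) (by norm_num) (by norm_num)

private lemma prodeq' {a b : Z2} (h1 : a.1 = b.1) (h2 : a.2 = b.2) : a = b :=
  Prod.ext_iff.mpr ⟨h1, h2⟩

/-- for `k − ℓ > 1`, if `s − s' = w₁ + w₂` for `s, s' ∈ S`, then
`s' + w₁ ∈ S` and `s' + w₂ ∈ S`. -/
theorem neighbor_forced_II
    (k l : ℤ) (hl : 0 ≤ l) (hkl : l + 1 < k)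
    (S : Set Z2) (hSne : S.Nonempty) (hdir : directSum S (Tset k l))
    (hconv : latticeConvex (S + Tset k l))
    (s s' : Z2) (hs : s ∈ S) (hs' : s' ∈ S)
    (hd : s - s' = wOne k + wTwo l) :
    s' + wOne k ∈ S ∧ s' + wTwo l ∈ S := by
  have h1 := congrArg Prod.fst hd
  have h2 := congrArg Prod.snd hd
  simp only [wOne, wTwo, Prod.fst_sub, Prod.snd_sub, Prod.fst_add, Prod.snd_add] at h1 h2
  have memK : ∀ (a : Z2), a ∈ S → ∀ j : ℤ, 0 ≤ j → j ≤ k →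
      a + (j, 0) ∈ S + Tset k l := by
    intro a ha j hj0 hj1
    exact Set.add_mem_add ha (Or.inl ⟨hj0, hj1, rfl⟩)
  -- q := (s'.1 + l + 1, s'.2 + 1) ∈ K
  have hq : ((s'.1 + l + 1, s'.2 + 1) : Z2) ∈ S + Tset k l := by
    refine midpoint_mem' hconv (memK s' hs' (l+2) (by omega) (by omega))
      (memK s hs k (by omega) le_rfl) ?_ ?_ <;>
      simp only [Prod.fst_add, Prod.snd_add] <;> omega
  -- p := (s'.1 - 1, s'.2 + 1) ∈ K
  have hp : ((s'.1 - 1, s'.2 + 1) : Z2) ∈ S + Tset k l := by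
    refine midpoint_mem' hconv (memK s' hs' 0 le_rfl (by omega))
      (memK s hs (k - l - 2) (by omega) (by omega)) ?_ ?_ <;>
      simp only [Prod.fst_add, Prod.snd_add] <;> omega
  constructor
  · -- s' + wOne k ∈ S : analyze p
    rw [Set.mem_add] at hp
    obtain ⟨a, ha, t, ht, hat⟩ := hp
    have e1 := congrArg Prod.fst hat
    have e2 := congrArg Prod.snd hat
    simp only [Prod.fst_add, Prod.snd_add] at e1 e2
    simp only [Tset, T1set, T2set, Set.mem_union, Set.mem_setOf_eq] at ht
    rcases ht with ⟨ht0, ht1, ht2⟩ | ⟨ht0, ht1, ht2⟩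
    · -- t ∈ T1 : a = (s'.1 - 1 - t.1, s'.2 + 1)
      by_cases hcase : a.1 = s'.1 - k - 1
      · have : a = s' + wOne k := by
          apply prodeq' <;> simp only [Prod.fst_add, Prod.snd_add, wOne] <;> omega
        rwa [this] at ha
      · exfalso
        have hlt : s'.1 - k ≤ a.1 := by omega
        have heq : a + (s'.1 - a.1, 0) = s' + (0, 1) := by
          apply prodeq' <;> simp only [Prod.fst_add, Prod.snd_add] <;> omega
        have := hdir a ha s' hs' (s'.1 - a.1, 0) (Or.inl ⟨by omega, by omega, rfl⟩)
          (0, 1) (Or.inr ⟨le_rfl, hl, rfl⟩) heq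
        have := congrArg Prod.snd this.1
        omega
    · -- t ∈ T2 : a = (s'.1 - 1 - t.1, s'.2)
      exfalso
      have heq : a + (s'.1 - a.1, 0) = s' + (0, 0) := by
        apply prodeq' <;> simp only [Prod.fst_add, Prod.snd_add] <;> omega
      have := hdir a ha s' hs' (s'.1 - a.1, 0) (Or.inl ⟨by omega, by omega, rfl⟩)
        (0, 0) (Or.inl ⟨le_rfl, by omega, rfl⟩) heq
      have := congrArg Prod.fst this.1
      omega
  · -- s' + wTwo l ∈ S : analyze q
    rw [Set.mem_add] at hq
    obtain ⟨a, ha, t, ht, hat⟩ := hq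
    have e1 := congrArg Prod.fst hat
    have e2 := congrArg Prod.snd hat
    simp only [Prod.fst_add, Prod.snd_add] at e1 e2
    simp only [Tset, T1set, T2set, Set.mem_union, Set.mem_setOf_eq] at ht
    rcases ht with ⟨ht0, ht1, ht2⟩ | ⟨ht0, ht1, ht2⟩
    · -- t ∈ T1 : a = (s'.1 + l + 1 - t.1, s'.2 + 1)
      by_cases hcase : a.1 = s'.1 + l + 1
      · have : a = s' + wTwo l := by
          apply prodeq' <;> simp only [Prod.fst_add, Prod.snd_add, wTwo] <;> omega
        rwa [this] at ha
      · exfalso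
        have heq : a + (0, 1) = s + (a.1 - s.1, 0) := by
          apply prodeq' <;> simp only [Prod.fst_add, Prod.snd_add] <;> omega
        have := hdir a ha s hs (0, 1) (Or.inr ⟨le_rfl, hl, rfl⟩)
          (a.1 - s.1, 0) (Or.inl ⟨by omega, by omega, rfl⟩) heq
        have := congrArg Prod.snd this.1
        omega
    · -- t ∈ T2 : a = (s'.1 + l + 1 - t.1, s'.2)
      exfalso
      have heq : a + (0, 0) = s' + (a.1 - s'.1, 0) := by
        apply prodeq' <;> simp only [Prod.fst_add, Prod.snd_add] <;> omega
      have := hdir a ha s' hs' (0, 0) (Or.inl ⟨le_rfl, by omega, rfl⟩)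
        (a.1 - s'.1, 0) (Or.inl ⟨by omega, by omega, rfl⟩) heq
      have := congrArg Prod.fst this.1
      omega
end

section
/- Let k − ℓ = 1 and let S ⊆ ℤ² be nonempty and such that the sum of S and T is direct and S ⊕ T is lattice-convex. Then for all s, s' ∈ S: if s − s' = w₁ + 2w₂, then s' + w₂ ∈ S and s' + w₁ + w₂ ∈ S; and if s − s' = 2w₁ + w₂, then s' + w₁ ∈ S and s' + w₁ + w₂ ∈ S. -/
open scoped Pointwise ENNReal

section Aux

lemma mem_T1' {k l j : ℤ} (h0 : 0 ≤ j) (hk : j ≤ k) : ((j, (0:ℤ)) : Z2) ∈ Tset k l :=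
  Set.mem_union_left _ ⟨h0, hk, rfl⟩

lemma mem_T2' {k l j : ℤ} (h0 : 0 ≤ j) (hl : j ≤ l) : ((j, (1:ℤ)) : Z2) ∈ Tset k l :=
  Set.mem_union_right _ ⟨h0, hl, rfl⟩

lemma addeq' (t1 t2 u1 u2 : ℤ) {p q : Z2} (h1 : p.1 + t1 = q.1 + u1)
    (h2 : p.2 + t2 = q.2 + u2) : p + ((t1, t2) : Z2) = q + ((u1, u2) : Z2) :=
  Prod.ext_iff.mpr ⟨h1, h2⟩

lemma mkeq {p : Z2} {x y : ℤ} (h1 : p.1 = x) (h2 : p.2 = y) : p = ((x, y) : Z2) :=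
  Prod.ext_iff.mpr ⟨h1, h2⟩

lemma addmk {p : Z2} {u v x y : ℤ} (h1 : p.1 + u = x) (h2 : p.2 + v = y) :
    p + ((u, v) : Z2) = ((x, y) : Z2) :=
  Prod.ext_iff.mpr ⟨h1, h2⟩

lemma convex_force {S : Set Z2} {k l : ℤ} {C : Set R2} (hC : Convex ℝ C)
    (hK : S + Tset k l = toR ⁻¹' C) {u v p : Z2} (hu : u ∈ S + Tset k l)
    (hv : v ∈ S + Tset k l) (c : ℝ) (hc0 : 0 ≤ c) (hc1 : c ≤ 1)
    (e1 : (p.1 : ℝ) = c * u.1 + (1 - c) * v.1)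
    (e2 : (p.2 : ℝ) = c * u.2 + (1 - c) * v.2) : p ∈ S + Tset k l := by
  rw [hK] at hu hv ⊢
  have hmem := hC hu hv (a := c) (b := 1 - c) hc0 (by linarith) (by ring)
  have heq : toR p = c • toR u + (1 - c) • toR v := by
    refine Prod.ext_iff.mpr ⟨?_, ?_⟩
    · simpa [toR] using e1
    · simpa [toR] using e2
  rw [Set.mem_preimage, heq]
  exact hmem

lemma decomp {k l : ℤ} {S : Set Z2} {P : Z2} (h : P ∈ S + Tset k l) :
    ∃ s₀ ∈ S, ∃ j : ℤ, 0 ≤ j ∧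
      ((j ≤ k ∧ s₀.1 = P.1 - j ∧ s₀.2 = P.2) ∨
        (j ≤ l ∧ s₀.1 = P.1 - j ∧ s₀.2 = P.2 - 1)) := by
  rcases Set.mem_add.mp h with ⟨s₀, hs₀, t, ht, hsum⟩
  refine ⟨s₀, hs₀, t.1, ?_⟩
  have h1 : s₀.1 + t.1 = P.1 := congrArg Prod.fst hsum
  have h2 : s₀.2 + t.2 = P.2 := congrArg Prod.snd hsum
  rcases ht with ⟨ht0, htk, hty⟩ | ⟨ht0, htl, hty⟩
  · exact ⟨ht0, Or.inl ⟨htk, by omega, by omega⟩⟩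
  · exact ⟨ht0, Or.inr ⟨htl, by omega, by omega⟩⟩

lemma core1 {k l : ℤ} (hl : 0 ≤ l) (hkl : k = l + 1) {S : Set Z2}
    (hdir : directSum S (Tset k l)) {C : Set R2} (hC : Convex ℝ C)
    (hK : S + Tset k l = toR ⁻¹' C) {s s' : Z2} (hs : s ∈ S) (hs' : s' ∈ S)
    (h1 : s.1 = s'.1 + l) (h2 : s.2 = s'.2 + 3) :
    ((s'.1 + (l + 1), s'.2 + 1) : Z2) ∈ S ∧ ((s'.1 - 1, s'.2 + 2) : Z2) ∈ S := by
  have r1 : (s.1 : ℝ) = (s'.1 : ℝ) + (l : ℝ) := by rw [h1]; push_cast; ring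
  have r2 : (s.2 : ℝ) = (s'.2 : ℝ) + 3 := by rw [h2]; push_cast; ring
  have rk : (k : ℝ) = (l : ℝ) + 1 := by rw [hkl]; push_cast; ring
  have hu1 : s' + ((k, 0) : Z2) ∈ S + Tset k l :=
    Set.add_mem_add hs' (mem_T1' (by omega) le_rfl)
  have hv1 : s + ((1, 0) : Z2) ∈ S + Tset k l :=
    Set.add_mem_add hs (mem_T1' (by omega) (by omega))
  have hP : ((s'.1 + (l + 1), s'.2 + 1) : Z2) ∈ S + Tset k l := by
    refine convex_force hC hK hu1 hv1 (2/3) (by norm_num) (by norm_num) ?_ ?_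
    · simp only [Prod.fst_add]; push_cast; rw [r1, rk]; ring
    · simp only [Prod.snd_add]; push_cast; rw [r2]; ring
  have hPS : ((s'.1 + (l + 1), s'.2 + 1) : Z2) ∈ S := by
    obtain ⟨s₀, hs₀, j, hj0, hcase⟩ := decomp hP
    rcases hcase with ⟨hjk, hx, hy⟩ | ⟨hjl, hx, hy⟩
    · simp only at hx hy
      rcases eq_or_lt_of_le hj0 with hj | hj
      · have he : s₀ = (((s'.1 + (l + 1), s'.2 + 1)) : Z2) := mkeq (by omega) (by omega)
        exact he ▸ hs₀
      · exfalso
        have hcol := hdir s₀ hs₀ s' hs' ((0, 0) : Z2) (mem_T1' le_rfl (by omega))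
          ((l + 1 - j, 1) : Z2) (mem_T2' (by omega) (by omega))
          (addeq' 0 0 (l + 1 - j) 1 (by omega) (by omega))
        have := congrArg Prod.snd hcol.1
        omega
    · simp only at hx hy
      exfalso
      have hcol := hdir s₀ hs₀ s' hs' ((0, 0) : Z2) (mem_T1' le_rfl (by omega))
        ((l + 1 - j, 0) : Z2) (mem_T1' (by omega) (by omega))
        (addeq' 0 0 (l + 1 - j) 0 (by omega) (by omega))
      have := congrArg Prod.fst hcol.1
      omega
  refine ⟨hPS, ?_⟩
  have hu2 : s' + ((l, 1) : Z2) ∈ S + Tset k l :=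
    Set.add_mem_add hs' (mem_T2' hl le_rfl)
  have hv2 : s + ((0, 0) : Z2) ∈ S + Tset k l :=
    Set.add_mem_add hs (mem_T1' le_rfl (by omega))
  have hQ : ((s'.1 + l, s'.2 + 2) : Z2) ∈ S + Tset k l := by
    refine convex_force hC hK hu2 hv2 (1/2) (by norm_num) (by norm_num) ?_ ?_
    · simp only [Prod.fst_add]; push_cast; rw [r1]; ring
    · simp only [Prod.snd_add]; push_cast; rw [r2]; ring
  obtain ⟨s₀, hs₀, j, hj0, hcase⟩ := decomp hQ
  rcases hcase with ⟨hjk, hx, hy⟩ | ⟨hjl, hx, hy⟩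
  · simp only at hx hy
    rcases eq_or_lt_of_le hjk with hj | hj
    · have he : s₀ = (((s'.1 - 1, s'.2 + 2)) : Z2) := mkeq (by omega) (by omega)
      exact he ▸ hs₀
    · exfalso
      have hcol := hdir s₀ hs₀ s hs ((j, 1) : Z2) (mem_T2' hj0 (by omega))
        ((0, 0) : Z2) (mem_T1' le_rfl (by omega))
        (addeq' j 1 0 0 (by omega) (by omega))
      have := congrArg Prod.snd hcol.1
      omega
  · simp only at hx hy
    exfalso
    have hcol := hdir s₀ hs₀ s' hs' ((0, 0) : Z2) (mem_T1' le_rfl (by omega))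
      ((l - j, 1) : Z2) (mem_T2' (by omega) (by omega))
      (addeq' 0 0 (l - j) 1 (by omega) (by omega))
    have := congrArg Prod.snd hcol.1
    omega

lemma core2 {k l : ℤ} (hl : 0 ≤ l) (hkl : k = l + 1) {S : Set Z2}
    (hdir : directSum S (Tset k l)) {C : Set R2} (hC : Convex ℝ C)
    (hK : S + Tset k l = toR ⁻¹' C) {s s' : Z2} (hs : s ∈ S) (hs' : s' ∈ S)
    (h1 : s.1 = s'.1 - l - 3) (h2 : s.2 = s'.2 + 3) :
    ((s'.1 - (l + 2), s'.2 + 1) : Z2) ∈ S ∧ ((s'.1 - 1, s'.2 + 2) : Z2) ∈ S := by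
  have r1 : (s.1 : ℝ) = (s'.1 : ℝ) - (l : ℝ) - 3 := by rw [h1]; push_cast; ring
  have r2 : (s.2 : ℝ) = (s'.2 : ℝ) + 3 := by rw [h2]; push_cast; ring
  have hu1 : s' + ((0, 0) : Z2) ∈ S + Tset k l :=
    Set.add_mem_add hs' (mem_T1' le_rfl (by omega))
  have hv1 : s + ((l, 0) : Z2) ∈ S + Tset k l :=
    Set.add_mem_add hs (mem_T1' hl (by omega))
  have hP : ((s'.1 - 1, s'.2 + 1) : Z2) ∈ S + Tset k l := by
    refine convex_force hC hK hu1 hv1 (2/3) (by norm_num) (by norm_num) ?_ ?_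
    · simp only [Prod.fst_add]; push_cast; rw [r1]; ring
    · simp only [Prod.snd_add]; push_cast; rw [r2]; ring
  have hPS : ((s'.1 - (l + 2), s'.2 + 1) : Z2) ∈ S := by
    obtain ⟨s₀, hs₀, j, hj0, hcase⟩ := decomp hP
    rcases hcase with ⟨hjk, hx, hy⟩ | ⟨hjl, hx, hy⟩
    · simp only at hx hy
      rcases eq_or_lt_of_le hjk with hj | hj
      · have he : s₀ = (((s'.1 - (l + 2), s'.2 + 1)) : Z2) := mkeq (by omega) (by omega)
        exact he ▸ hs₀
      · exfalso
        have hcol := hdir s₀ hs₀ s' hs' ((1 + j, 0) : Z2) (mem_T1' (by omega) (by omega))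
          ((0, 1) : Z2) (mem_T2' le_rfl hl)
          (addeq' (1 + j) 0 0 1 (by omega) (by omega))
        have := congrArg Prod.snd hcol.1
        omega
    · simp only at hx hy
      exfalso
      have hcol := hdir s₀ hs₀ s' hs' ((1 + j, 0) : Z2) (mem_T1' (by omega) (by omega))
        ((0, 0) : Z2) (mem_T1' le_rfl (by omega))
        (addeq' (1 + j) 0 0 0 (by omega) (by omega))
      have := congrArg Prod.fst hcol.1
      omega
  refine ⟨hPS, ?_⟩
  have hu2 : s' + ((l, 1) : Z2) ∈ S + Tset k l :=
    Set.add_mem_add hs' (mem_T2' hl le_rfl)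
  have hv2 : s + ((1, 0) : Z2) ∈ S + Tset k l :=
    Set.add_mem_add hs (mem_T1' (by omega) (by omega))
  have hQ : ((s'.1 - 1, s'.2 + 2) : Z2) ∈ S + Tset k l := by
    refine convex_force hC hK hu2 hv2 (1/2) (by norm_num) (by norm_num) ?_ ?_
    · simp only [Prod.fst_add]; push_cast; rw [r1]; ring
    · simp only [Prod.snd_add]; push_cast; rw [r2]; ring
  obtain ⟨s₀, hs₀, j, hj0, hcase⟩ := decomp hQ
  rcases hcase with ⟨hjk, hx, hy⟩ | ⟨hjl, hx, hy⟩
  · simp only at hx hy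
    rcases eq_or_lt_of_le hj0 with hj | hj
    · have he : s₀ = (((s'.1 - 1, s'.2 + 2)) : Z2) := mkeq (by omega) (by omega)
      exact he ▸ hs₀
    · exfalso
      have hcol := hdir s₀ hs₀ s hs ((0, 1) : Z2) (mem_T2' le_rfl hl)
        ((l + 2 - j, 0) : Z2) (mem_T1' (by omega) (by omega))
        (addeq' 0 1 (l + 2 - j) 0 (by omega) (by omega))
      have := congrArg Prod.snd hcol.1
      omega
  · simp only at hx hy
    exfalso
    have hcol := hdir s₀ hs₀ s' hs' ((1 + j, 0) : Z2) (mem_T1' (by omega) (by omega))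
      ((0, 1) : Z2) (mem_T2' le_rfl hl)
      (addeq' (1 + j) 0 0 1 (by omega) (by omega))
    have := congrArg Prod.snd hcol.1
    omega

end Aux

/-- for `k − ℓ = 1`, if `s − s' = w₁ + 2w₂` then
`s' + w₂, s' + w₁ + w₂ ∈ S`, and if `s − s' = 2w₁ + w₂` then
`s' + w₁, s' + w₁ + w₂ ∈ S`. -/
theorem neighbor_forced_III_IV
    (k l : ℤ) (hl : 0 ≤ l) (hkl : k = l + 1)
    (S : Set Z2) (hSne : S.Nonempty) (hdir : directSum S (Tset k l))
    (hconv : latticeConvex (S + Tset k l)) :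
    ∀ s ∈ S, ∀ s' ∈ S,
      ((s - s' = wOne k + (2 : ℤ) • wTwo l →
          s' + wTwo l ∈ S ∧ s' + wOne k + wTwo l ∈ S) ∧
        (s - s' = (2 : ℤ) • wOne k + wTwo l →
          s' + wOne k ∈ S ∧ s' + wOne k + wTwo l ∈ S)) := by
  obtain ⟨C, hC, hK⟩ := hconv
  intro s hs s' hs'
  constructor
  · intro hrel
    have e1 := congrArg Prod.fst hrel
    have e2 := congrArg Prod.snd hrel
    simp [wOne, wTwo] at e1 e2
    have h1 : s.1 = s'.1 + l := by omega
    have h2 : s.2 = s'.2 + 3 := by omega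
    obtain ⟨hA, hB⟩ := core1 hl hkl hdir hC hK hs hs' h1 h2
    constructor
    · have key : s' + wTwo l = ((s'.1 + (l + 1), s'.2 + 1) : Z2) :=
        addmk (by omega) (by omega)
      rw [key]; exact hA
    · have ka : s' + wOne k = ((s'.1 - (l + 2), s'.2 + 1) : Z2) :=
        addmk (by omega) (by omega)
      have kb : ((s'.1 - (l + 2), s'.2 + 1) : Z2) + wTwo l = ((s'.1 - 1, s'.2 + 2) : Z2) :=
        addmk (by omega) (by omega)
      rw [ka, kb]; exact hB
  · intro hrel
    have e1 := congrArg Prod.fst hrel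
    have e2 := congrArg Prod.snd hrel
    simp [wOne, wTwo] at e1 e2
    have h1 : s.1 = s'.1 - l - 3 := by omega
    have h2 : s.2 = s'.2 + 3 := by omega
    obtain ⟨hA, hB⟩ := core2 hl hkl hdir hC hK hs hs' h1 h2
    constructor
    · have key : s' + wOne k = ((s'.1 - (l + 2), s'.2 + 1) : Z2) :=
        addmk (by omega) (by omega)
      rw [key]; exact hA
    · have ka : s' + wOne k = ((s'.1 - (l + 2), s'.2 + 1) : Z2) :=
        addmk (by omega) (by omega)
      have kb : ((s'.1 - (l + 2), s'.2 + 1) : Z2) + wTwo l = ((s'.1 - 1, s'.2 + 2) : Z2) :=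
        addmk (by omega) (by omega)
      rw [ka, kb]; exact hB
end

section
/- Let k − ℓ > 1 and let S ⊆ 𝕃 be such that the graph G_S is connected and such that for all s, s' ∈ S: (a) s − s' = w₂ − w₁ implies s' − w₁ ∈ S and s' + w₂ ∈ S; (b) s − s' = w₂ + w₁ implies s' + w₁ ∈ S and s' + w₂ ∈ S. Then there exist order-convex subsets (intervals) A, B ⊆ ℤ such that S = {i w₁ + j w₂ : i ∈ A, j ∈ B}; equivalently, S = {i w₁ + j w₂ : i, j ∈ ℤ, α₁ ≤ i ≤ α₂, β₁ ≤ j ≤ β₂} for some α₁, α₂, β₁, β₂ ∈ ℤ ∪ {−∞, +∞}. -/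
open scoped Pointwise ENNReal

/-- Betweenness on `ℤ`. -/
private def Btwn (a x b : ℤ) : Prop := (a ≤ x ∧ x ≤ b) ∨ (b ≤ x ∧ x ≤ a)

private lemma fill_col (T : Set (ℤ × ℤ))
    (hd : ∀ i j : ℤ, (i,j) ∈ T → (i+1,j+1) ∈ T → (i+1,j) ∈ T ∧ (i,j+1) ∈ T)
    (hA : ∀ i j : ℤ, (i+1,j) ∈ T → (i,j+1) ∈ T → (i,j) ∈ T ∧ (i+1,j+1) ∈ T)
    (c e y0 y1 : ℤ) (he : e = 1 ∨ e = -1)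
    (hcol : ∀ y, Btwn y0 y y1 → (c, y) ∈ T) (hend : (c + e, y1) ∈ T) :
    ∀ y, Btwn y0 y y1 → (c + e, y) ∈ T := by
  have key : ∀ n : ℕ, ∀ y : ℤ, (y1 - y).natAbs = n → Btwn y0 y y1 → (c + e, y) ∈ T := by
    intro n
    induction n using Nat.strong_induction_on with
    | _ n ih =>
      intro y hn hy
      rcases eq_or_ne y y1 with rfl | hne
      · exact hend
      rcases lt_or_gt_of_ne hne with hlt | hgt
      · have hy1 : Btwn y0 (y+1) y1 := by unfold Btwn at *; omega
        have hmem : (c + e, y + 1) ∈ T :=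
          ih (y1 - (y+1)).natAbs (by omega) (y+1) rfl hy1
        have hc := hcol y hy
        rcases he with rfl | rfl
        · exact (hd c y hc hmem).1
        · have h1 : (c - 1 + 1, y) ∈ T := by rw [show c - 1 + 1 = c by ring]; exact hc
          have h2 : (c - 1, y + 1) ∈ T := by rw [show c - 1 = c + (-1) by ring]; exact hmem
          have := (hA (c - 1) y h1 h2).1
          rw [show c + (-1) = c - 1 by ring]; exact this
      · have hy1 : Btwn y0 (y-1) y1 := by unfold Btwn at *; omega
        have hmem : (c + e, y - 1) ∈ T :=
          ih (y1 - (y-1)).natAbs (by omega) (y-1) rfl hy1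
        have hc := hcol y hy
        rcases he with rfl | rfl
        · have h2 : (c, y - 1 + 1) ∈ T := by rw [show y - 1 + 1 = y by ring]; exact hc
          have := (hA c (y-1) hmem h2).2
          rw [show y - 1 + 1 = y by ring] at this; exact this
        · have h1 : (c - 1, y - 1) ∈ T := by rw [show c - 1 = c + (-1) by ring]; exact hmem
          have h2 : (c - 1 + 1, y - 1 + 1) ∈ T := by
            rw [show c - 1 + 1 = c by ring, show y - 1 + 1 = y by ring]; exact hc
          have := (hd (c-1) (y-1) h1 h2).2
          rw [show y - 1 + 1 = y by ring, show c - 1 = c + (-1) by ring] at this; exact this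
  intro y hy
  exact key _ y rfl hy

private lemma fill_row (T : Set (ℤ × ℤ))
    (hd : ∀ i j : ℤ, (i,j) ∈ T → (i+1,j+1) ∈ T → (i+1,j) ∈ T ∧ (i,j+1) ∈ T)
    (hA : ∀ i j : ℤ, (i+1,j) ∈ T → (i,j+1) ∈ T → (i,j) ∈ T ∧ (i+1,j+1) ∈ T)
    (r e x0 x1 : ℤ) (he : e = 1 ∨ e = -1)
    (hrow : ∀ x, Btwn x0 x x1 → (x, r) ∈ T) (hend : (x1, r + e) ∈ T) :
    ∀ x, Btwn x0 x x1 → (x, r + e) ∈ T := by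
  have hd' : ∀ i j : ℤ, (j, i) ∈ T → (j+1, i+1) ∈ T → (j, i+1) ∈ T ∧ (j+1, i) ∈ T := by
    intro i j h1 h2
    have := hd j i h1 h2
    exact ⟨this.2, this.1⟩
  have hA' : ∀ i j : ℤ, (j, i+1) ∈ T → (j+1, i) ∈ T → (j, i) ∈ T ∧ (j+1, i+1) ∈ T := by
    intro i j h1 h2
    have := hA j i h2 h1
    exact ⟨this.1, this.2⟩
  intro x hx
  exact fill_col {q : ℤ × ℤ | (q.2, q.1) ∈ T}
    (fun i j h1 h2 => hd' i j h1 h2) (fun i j h1 h2 => hA' i j h1 h2)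
    r e x0 x1 he (fun y hy => hrow y hy) hend x hx

private def stepRel (T : Set (ℤ × ℤ)) (s t : ℤ × ℤ) : Prop :=
  s ∈ T ∧ t ∈ T ∧ (t - s = ((1:ℤ), (0:ℤ)) ∨ t - s = (-1, 0) ∨ t - s = (0, 1) ∨ t - s = (0, -1))

private lemma rect_mem (T : Set (ℤ × ℤ))
    (hd : ∀ i j : ℤ, (i,j) ∈ T → (i+1,j+1) ∈ T → (i+1,j) ∈ T ∧ (i,j+1) ∈ T)
    (hA : ∀ i j : ℤ, (i+1,j) ∈ T → (i,j+1) ∈ T → (i,j) ∈ T ∧ (i+1,j+1) ∈ T)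
    {a b : ℤ × ℤ} (ha : a ∈ T) (hpath : Relation.ReflTransGen (stepRel T) a b) :
    ∀ p : ℤ × ℤ, Btwn a.1 p.1 b.1 → Btwn a.2 p.2 b.2 → p ∈ T := by
  induction hpath with
  | refl =>
      intro p h1 h2
      have hp : p.1 = a.1 ∧ p.2 = a.2 := by unfold Btwn at *; omega
      have : p = a := Prod.ext_iff.mpr hp
      rw [this]; exact ha
  | @tail m c hab hstep ih =>
      obtain ⟨hm, hc, hdir⟩ := hstep
      rcases hdir with h | h | h | h
      · have e1 : c.1 - m.1 = 1 := by have := congrArg Prod.fst h; simpa using this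
        have e2 : c.2 - m.2 = 0 := by have := congrArg Prod.snd h; simpa using this
        have hcol : ∀ y, Btwn a.2 y m.2 → (m.1, y) ∈ T := fun y hy =>
          ih (m.1, y) (show Btwn a.1 m.1 m.1 by unfold Btwn; omega) hy
        have hend : (m.1 + 1, m.2) ∈ T := by
          have : (m.1 + 1, m.2) = c := Prod.ext_iff.mpr ⟨by omega, by omega⟩
          rw [this]; exact hc
        have hfill := fill_col T hd hA m.1 1 a.2 m.2 (Or.inl rfl) hcol hend
        intro p hp1 hp2
        have hp2' : Btwn a.2 p.2 m.2 := by unfold Btwn at *; omega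
        by_cases hcase : Btwn a.1 p.1 m.1
        · exact ih p hcase hp2'
        · have hx : p.1 = m.1 + 1 := by unfold Btwn at *; omega
          have : p = (m.1 + 1, p.2) := Prod.ext_iff.mpr ⟨hx, rfl⟩
          rw [this]; exact hfill p.2 hp2'
      · have e1 : c.1 - m.1 = -1 := by have := congrArg Prod.fst h; simpa using this
        have e2 : c.2 - m.2 = 0 := by have := congrArg Prod.snd h; simpa using this
        have hcol : ∀ y, Btwn a.2 y m.2 → (m.1, y) ∈ T := fun y hy =>
          ih (m.1, y) (show Btwn a.1 m.1 m.1 by unfold Btwn; omega) hy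
        have hend : (m.1 + (-1), m.2) ∈ T := by
          have : (m.1 + (-1), m.2) = c := Prod.ext_iff.mpr ⟨by omega, by omega⟩
          rw [this]; exact hc
        have hfill := fill_col T hd hA m.1 (-1) a.2 m.2 (Or.inr rfl) hcol hend
        intro p hp1 hp2
        have hp2' : Btwn a.2 p.2 m.2 := by unfold Btwn at *; omega
        by_cases hcase : Btwn a.1 p.1 m.1
        · exact ih p hcase hp2'
        · have hx : p.1 = m.1 + (-1) := by unfold Btwn at *; omega
          have : p = (m.1 + (-1), p.2) := Prod.ext_iff.mpr ⟨hx, rfl⟩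
          rw [this]; exact hfill p.2 hp2'
      · have e1 : c.1 - m.1 = 0 := by have := congrArg Prod.fst h; simpa using this
        have e2 : c.2 - m.2 = 1 := by have := congrArg Prod.snd h; simpa using this
        have hrow : ∀ x, Btwn a.1 x m.1 → (x, m.2) ∈ T := fun x hx =>
          ih (x, m.2) hx (show Btwn a.2 m.2 m.2 by unfold Btwn; omega)
        have hend : (m.1, m.2 + 1) ∈ T := by
          have : (m.1, m.2 + 1) = c := Prod.ext_iff.mpr ⟨by omega, by omega⟩
          rw [this]; exact hc
        have hfill := fill_row T hd hA m.2 1 a.1 m.1 (Or.inl rfl) hrow hend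
        intro p hp1 hp2
        have hp1' : Btwn a.1 p.1 m.1 := by unfold Btwn at *; omega
        by_cases hcase : Btwn a.2 p.2 m.2
        · exact ih p hp1' hcase
        · have hy : p.2 = m.2 + 1 := by unfold Btwn at *; omega
          have : p = (p.1, m.2 + 1) := Prod.ext_iff.mpr ⟨rfl, hy⟩
          rw [this]; exact hfill p.1 hp1'
      · have e1 : c.1 - m.1 = 0 := by have := congrArg Prod.fst h; simpa using this
        have e2 : c.2 - m.2 = -1 := by have := congrArg Prod.snd h; simpa using this
        have hrow : ∀ x, Btwn a.1 x m.1 → (x, m.2) ∈ T := fun x hx =>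
          ih (x, m.2) hx (show Btwn a.2 m.2 m.2 by unfold Btwn; omega)
        have hend : (m.1, m.2 + (-1)) ∈ T := by
          have : (m.1, m.2 + (-1)) = c := Prod.ext_iff.mpr ⟨by omega, by omega⟩
          rw [this]; exact hc
        have hfill := fill_row T hd hA m.2 (-1) a.1 m.1 (Or.inr rfl) hrow hend
        intro p hp1 hp2
        have hp1' : Btwn a.1 p.1 m.1 := by unfold Btwn at *; omega
        by_cases hcase : Btwn a.2 p.2 m.2
        · exact ih p hp1' hcase
        · have hy : p.2 = m.2 + (-1) := by unfold Btwn at *; omega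
          have : p = (p.1, m.2 + (-1)) := Prod.ext_iff.mpr ⟨rfl, hy⟩
          rw [this]; exact hfill p.1 hp1'

/-- Coordinate extraction map, left inverse of `(i,j) ↦ i•w₁ + j•w₂` on `𝕃`. -/
private def phiMap (k l : ℤ) (p : Z2) : ℤ × ℤ :=
  (((l+1) * p.2 - p.1) / (k+l+2), (p.1 + (k+1) * p.2) / (k+l+2))

private lemma smul_pair (k l i j : ℤ) :
    i • wOne k + j • wTwo l = ((i * (-k-1) + j * (l+1), i + j) : Z2) := by
  simp only [wOne, wTwo, Prod.smul_mk, smul_eq_mul, Prod.mk_add_mk, Prod.mk.injEq]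
  exact ⟨trivial, by ring⟩

private lemma phi_psi (k l : ℤ) (hD : k + l + 2 ≠ 0) (i j : ℤ) :
    phiMap k l (i • wOne k + j • wTwo l) = (i, j) := by
  rw [smul_pair]
  unfold phiMap
  refine Prod.ext_iff.mpr ⟨?_, ?_⟩
  · show ((l+1) * (i+j) - (i * (-k-1) + j * (l+1))) / (k+l+2) = i
    rw [show (l+1) * (i+j) - (i * (-k-1) + j * (l+1)) = i * (k+l+2) by ring]
    exact Int.mul_ediv_cancel i hD
  · show ((i * (-k-1) + j * (l+1)) + (k+1) * (i+j)) / (k+l+2) = j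
    rw [show (i * (-k-1) + j * (l+1)) + (k+1) * (i+j) = j * (k+l+2) by ring]
    exact Int.mul_ediv_cancel j hD


/-- for `k − ℓ > 1`, a connected `S ⊆ 𝕃` satisfying the two
completion rules is a grid: `S = {i w₁ + j w₂ : i ∈ A, j ∈ B}` for intervals
`A, B ⊆ ℤ`. -/
theorem grid_graph_characterization
    (k l : ℤ) (hl : 0 ≤ l) (hkl : l + 1 < k)
    (S : Set Z2) (hS : S ⊆ ZLat k l)
    (hconn : GConnected k l S)
    (ha : ∀ s ∈ S, ∀ s' ∈ S, s - s' = wTwo l - wOne k →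
      s' - wOne k ∈ S ∧ s' + wTwo l ∈ S)
    (hb : ∀ s ∈ S, ∀ s' ∈ S, s - s' = wTwo l + wOne k →
      s' + wOne k ∈ S ∧ s' + wTwo l ∈ S) :
    ∃ A B : Set ℤ, A.OrdConnected ∧ B.OrdConnected ∧
      S = {p : Z2 | ∃ i ∈ A, ∃ j ∈ B, p = i • wOne k + j • wTwo l} := by
  have hD : k + l + 2 ≠ 0 := by omega
  set T : Set (ℤ × ℤ) := {q : ℤ × ℤ | q.1 • wOne k + q.2 • wTwo l ∈ S} with hTdef
  have hdT : ∀ i j : ℤ, (i,j) ∈ T → (i+1,j+1) ∈ T → (i+1,j) ∈ T ∧ (i,j+1) ∈ T := by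
    intro i j h1 h2
    have h1' : i • wOne k + j • wTwo l ∈ S := h1
    have h2' : (i+1) • wOne k + (j+1) • wTwo l ∈ S := h2
    have hdiff : ((i+1) • wOne k + (j+1) • wTwo l) - (i • wOne k + j • wTwo l)
        = wTwo l + wOne k := by
      module
    obtain ⟨hw1, hw2⟩ := hb _ h2' _ h1' hdiff
    constructor
    · show (i+1) • wOne k + j • wTwo l ∈ S
      have e : (i • wOne k + j • wTwo l) + wOne k = (i+1) • wOne k + j • wTwo l := by
        module
      rw [← e]; exact hw1
    · show i • wOne k + (j+1) • wTwo l ∈ S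
      have e : (i • wOne k + j • wTwo l) + wTwo l = i • wOne k + (j+1) • wTwo l := by
        module
      rw [← e]; exact hw2
  have hAT : ∀ i j : ℤ, (i+1,j) ∈ T → (i,j+1) ∈ T → (i,j) ∈ T ∧ (i+1,j+1) ∈ T := by
    intro i j h1 h2
    have h1' : (i+1) • wOne k + j • wTwo l ∈ S := h1
    have h2' : i • wOne k + (j+1) • wTwo l ∈ S := h2
    have hdiff : (i • wOne k + (j+1) • wTwo l) - ((i+1) • wOne k + j • wTwo l)
        = wTwo l - wOne k := by
      module
    obtain ⟨hw1, hw2⟩ := ha _ h2' _ h1' hdiff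
    constructor
    · show i • wOne k + j • wTwo l ∈ S
      have e : ((i+1) • wOne k + j • wTwo l) - wOne k = i • wOne k + j • wTwo l := by
        module
      rw [← e]; exact hw1
    · show (i+1) • wOne k + (j+1) • wTwo l ∈ S
      have e : ((i+1) • wOne k + j • wTwo l) + wTwo l = (i+1) • wOne k + (j+1) • wTwo l := by
        module
      rw [← e]; exact hw2
  have hlift : ∀ s t : Z2, adjStep k l S s t → stepRel T (phiMap k l s) (phiMap k l t) := by
    intro s t hst
    obtain ⟨hs, ht, hdir⟩ := hst
    obtain ⟨a, b, hseq⟩ := hS hs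
    have hφs : phiMap k l s = (a, b) := by rw [hseq]; exact phi_psi k l hD a b
    have hsT : phiMap k l s ∈ T := by
      rw [hφs]; show a • wOne k + b • wTwo l ∈ S; rw [← hseq]; exact hs
    rcases hdir with h | h | h | h | ⟨hk, _⟩
    · have hteq : t = (a+1) • wOne k + b • wTwo l := by
        rw [sub_eq_iff_eq_add] at h
        rw [h, hseq]; module
      have hφt : phiMap k l t = (a+1, b) := by rw [hteq]; exact phi_psi k l hD _ _
      refine ⟨hsT, ?_, ?_⟩
      · rw [hφt]; show (a+1) • wOne k + b • wTwo l ∈ S; rw [← hteq]; exact ht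
      · left; rw [hφs, hφt, Prod.mk_sub_mk]
        refine Prod.ext_iff.mpr ⟨by omega, by omega⟩
    · have hteq : t = (a-1) • wOne k + b • wTwo l := by
        rw [sub_eq_iff_eq_add] at h
        rw [h, hseq]; module
      have hφt : phiMap k l t = (a-1, b) := by rw [hteq]; exact phi_psi k l hD _ _
      refine ⟨hsT, ?_, ?_⟩
      · rw [hφt]; show (a-1) • wOne k + b • wTwo l ∈ S; rw [← hteq]; exact ht
      · right; left; rw [hφs, hφt, Prod.mk_sub_mk]
        refine Prod.ext_iff.mpr ⟨by omega, by omega⟩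
    · have hteq : t = a • wOne k + (b+1) • wTwo l := by
        rw [sub_eq_iff_eq_add] at h
        rw [h, hseq]; module
      have hφt : phiMap k l t = (a, b+1) := by rw [hteq]; exact phi_psi k l hD _ _
      refine ⟨hsT, ?_, ?_⟩
      · rw [hφt]; show a • wOne k + (b+1) • wTwo l ∈ S; rw [← hteq]; exact ht
      · right; right; left; rw [hφs, hφt, Prod.mk_sub_mk]
        refine Prod.ext_iff.mpr ⟨by omega, by omega⟩
    · have hteq : t = a • wOne k + (b-1) • wTwo l := by
        rw [sub_eq_iff_eq_add] at h
        rw [h, hseq]; module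
      have hφt : phiMap k l t = (a, b-1) := by rw [hteq]; exact phi_psi k l hD _ _
      refine ⟨hsT, ?_, ?_⟩
      · rw [hφt]; show a • wOne k + (b-1) • wTwo l ∈ S; rw [← hteq]; exact ht
      · right; right; right; rw [hφs, hφt, Prod.mk_sub_mk]
        refine Prod.ext_iff.mpr ⟨by omega, by omega⟩
    · omega
  have hconnT : ∀ q ∈ T, ∀ q' ∈ T, Relation.ReflTransGen (stepRel T) q q' := by
    intro q hq q' hq'
    have hq1 : q.1 • wOne k + q.2 • wTwo l ∈ S := hq
    have hq2 : q'.1 • wOne k + q'.2 • wTwo l ∈ S := hq'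
    have hpath := hconn _ hq1 _ hq2
    have hlifted : Relation.ReflTransGen (stepRel T) (phiMap k l (q.1 • wOne k + q.2 • wTwo l))
        (phiMap k l (q'.1 • wOne k + q'.2 • wTwo l)) :=
      Relation.ReflTransGen.lift (phiMap k l) hlift _ _ hpath
    rw [phi_psi k l hD, phi_psi k l hD] at hlifted
    exact hlifted
  refine ⟨{i : ℤ | ∃ j, (i, j) ∈ T}, {j : ℤ | ∃ i, (i, j) ∈ T}, ?_, ?_, ?_⟩
  · constructor
    intro x hx y hy z hz
    obtain ⟨jx, hjx⟩ := hx
    obtain ⟨jy, hjy⟩ := hy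
    refine ⟨jx, rect_mem T hdT hAT hjx (hconnT _ hjx _ hjy) (z, jx) ?_ ?_⟩
    · show Btwn x z y; unfold Btwn; left; exact ⟨hz.1, hz.2⟩
    · show Btwn jx jx jy; unfold Btwn; omega
  · constructor
    intro x hx y hy z hz
    obtain ⟨ix, hix⟩ := hx
    obtain ⟨iy, hiy⟩ := hy
    refine ⟨ix, rect_mem T hdT hAT hix (hconnT _ hix _ hiy) (ix, z) ?_ ?_⟩
    · show Btwn ix ix iy; unfold Btwn; omega
    · show Btwn x z y; unfold Btwn; left; exact ⟨hz.1, hz.2⟩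
  · ext p
    constructor
    · intro hp
      obtain ⟨i, j, hpeq⟩ := hS hp
      have hT : (i, j) ∈ T := by
        show i • wOne k + j • wTwo l ∈ S; rw [← hpeq]; exact hp
      exact ⟨i, ⟨j, hT⟩, j, ⟨i, hT⟩, hpeq⟩
    · rintro ⟨i, ⟨j', hij'⟩, j, ⟨i', hi'j⟩, rfl⟩
      have hT : (i, j) ∈ T :=
        rect_mem T hdT hAT hij' (hconnT _ hij' _ hi'j) (i, j)
          (show Btwn i i i' by unfold Btwn; omega)
          (show Btwn j' j j by unfold Btwn; omega)
      exact hT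
end

section
/- Let k − ℓ = 1 and let S ⊆ 𝕃 be such that the graph G_S is connected and such that for all s, s' ∈ S: (a) s − s' = w₂ − w₁ implies s' − w₁ ∈ S and s' + w₂ ∈ S; (b) s − s' = w₁ + 2w₂ implies s' + w₂ ∈ S and s' + w₁ + w₂ ∈ S; (c) s − s' = 2w₁ + w₂ implies s' + w₁ ∈ S and s' + w₁ + w₂ ∈ S. Then S = {i w₁ + j w₂ : i, j ∈ ℤ, α₁ ≤ i ≤ α₂, β₁ ≤ j ≤ β₂, γ₁ ≤ i − j ≤ γ₂} for some α₁, α₂, β₁, β₂, γ₁, γ₂ ∈ ℤ ∪ {−∞, +∞}. -/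
namespace QGC

abbrev Pt := ℤ × ℤ

structure Core (T : Set Pt) : Prop where
  rA : ∀ a b : Pt, a ∈ T → b ∈ T → b.1 + 1 = a.1 → b.2 = a.2 + 1 →
    (b.1, a.2) ∈ T ∧ (a.1, b.2) ∈ T
  rB : ∀ a b : Pt, a ∈ T → b ∈ T → b.1 = a.1 + 1 → b.2 = a.2 + 2 →
    (a.1, a.2 + 1) ∈ T ∧ (b.1, a.2 + 1) ∈ T
  rC : ∀ a b : Pt, a ∈ T → b ∈ T → b.1 = a.1 + 2 → b.2 = a.2 + 1 →
    (a.1 + 1, a.2) ∈ T ∧ (a.1 + 1, b.2) ∈ T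

def Hex (A₁ A₂ B₁ B₂ C₁ C₂ : ℤ) : Set Pt :=
  {p | A₁ ≤ p.1 ∧ p.1 ≤ A₂ ∧ B₁ ≤ p.2 ∧ p.2 ≤ B₂ ∧ C₁ ≤ p.1 - p.2 ∧ p.1 - p.2 ≤ C₂}

lemma mem_hex {A₁ A₂ B₁ B₂ C₁ C₂ x y : ℤ} :
    (x, y) ∈ Hex A₁ A₂ B₁ B₂ C₁ C₂ ↔
      A₁ ≤ x ∧ x ≤ A₂ ∧ B₁ ≤ y ∧ y ≤ B₂ ∧ C₁ ≤ x - y ∧ x - y ≤ C₂ := Iff.rfl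

section fills

variable {T : Set Pt} {A₁ A₂ B₁ B₂ C₁ C₂ : ℤ}

/-- Fill the column `i = A₂+1` upward. -/
lemma colUpR (hT : Core T) (hsub : Hex A₁ A₂ B₁ B₂ C₁ C₂ ⊆ T)
    (j₀ : ℤ) (h0 : (A₂ + 1, j₀) ∈ T) (hB1 : B₁ ≤ j₀ + 1) (hC2 : A₂ - (j₀ + 1) ≤ C₂)
    (hAA : A₁ ≤ A₂) :
    ∀ z, j₀ ≤ z → z ≤ B₂ → C₁ ≤ A₂ - z → (A₂ + 1, z) ∈ T := by
  have main : ∀ z, j₀ ≤ z → z ≤ B₂ → C₁ ≤ A₂ - z → (A₂ + 1, z) ∈ T := by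
    refine Int.le_induction (fun _ _ => h0) ?_
    intro j hj ih h1 h2
    have hzT : (A₂ + 1, j) ∈ T := ih (by omega) (by omega)
    have hsupp : (A₂, j + 1) ∈ T := hsub (mem_hex.mpr (by omega))
    exact (hT.rA (A₂ + 1, j) (A₂, j + 1) hzT hsupp (by omega) rfl).2
  exact main

/-- Fill the column `i = A₂+1` downward. -/
lemma colDownR (hT : Core T) (hsub : Hex A₁ A₂ B₁ B₂ C₁ C₂ ⊆ T)
    (j₀ : ℤ) (h0 : (A₂ + 1, j₀) ∈ T) (hB2 : j₀ ≤ B₂ + 2) (hC1 : C₁ ≤ A₂ - j₀ + 2)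
    (hAA : A₁ ≤ A₂) :
    ∀ z, z ≤ j₀ → B₁ ≤ z - 1 → A₂ - z + 1 ≤ C₂ → (A₂ + 1, z) ∈ T := by
  have main : ∀ z, z ≤ j₀ → B₁ ≤ z - 1 → A₂ - z + 1 ≤ C₂ → (A₂ + 1, z) ∈ T := by
    refine Int.le_induction_down (fun _ _ => h0) ?_
    intro j hj ih h1 h2
    have hzT : (A₂ + 1, j) ∈ T := ih (by omega) (by omega)
    have hsupp : (A₂, j - 2) ∈ T := hsub (mem_hex.mpr (by omega))
    have := (hT.rB (A₂, j - 2) (A₂ + 1, j) hsupp hzT rfl (by omega)).2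
    -- (A₂+1, j-2+1) ∈ T
    have he : j - 2 + 1 = j - 1 := by ring
    rwa [he] at this
  exact main


/-- Fill the column `i = A₁-1` downward. -/
lemma colDownL (hT : Core T) (hsub : Hex A₁ A₂ B₁ B₂ C₁ C₂ ⊆ T)
    (j₀ : ℤ) (h0 : (A₁ - 1, j₀) ∈ T) (hB2 : j₀ ≤ B₂ + 1) (hC1 : C₁ ≤ A₁ - j₀ + 1)
    (hAA : A₁ ≤ A₂) :
    ∀ z, z ≤ j₀ → B₁ ≤ z → A₁ - z ≤ C₂ → (A₁ - 1, z) ∈ T := by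
  have main : ∀ z, z ≤ j₀ → B₁ ≤ z → A₁ - z ≤ C₂ → (A₁ - 1, z) ∈ T := by
    refine Int.le_induction_down (fun _ _ => h0) ?_
    intro j hj ih h1 h2
    have hzT : (A₁ - 1, j) ∈ T := ih (by omega) (by omega)
    have hsupp : (A₁, j - 1) ∈ T := hsub (mem_hex.mpr (by omega))
    exact (hT.rA (A₁, j - 1) (A₁ - 1, j) hsupp hzT (by omega) (by omega)).1
  exact main

/-- Fill the column `i = A₁-1` upward. -/
lemma colUpL (hT : Core T) (hsub : Hex A₁ A₂ B₁ B₂ C₁ C₂ ⊆ T)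
    (j₀ : ℤ) (h0 : (A₁ - 1, j₀) ∈ T) (hB1 : B₁ ≤ j₀ + 2) (hC2 : A₁ - j₀ - 2 ≤ C₂)
    (hAA : A₁ ≤ A₂) :
    ∀ z, j₀ ≤ z → z + 1 ≤ B₂ → C₁ ≤ A₁ - z - 1 → (A₁ - 1, z) ∈ T := by
  have main : ∀ z, j₀ ≤ z → z + 1 ≤ B₂ → C₁ ≤ A₁ - z - 1 → (A₁ - 1, z) ∈ T := by
    refine Int.le_induction (fun _ _ => h0) ?_
    intro j hj ih h1 h2
    have hzT : (A₁ - 1, j) ∈ T := ih (by omega) (by omega)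
    have hsupp : (A₁, j + 2) ∈ T := hsub (mem_hex.mpr (by omega))
    exact (hT.rB (A₁ - 1, j) (A₁, j + 2) hzT hsupp (by omega) rfl).1
  exact main

/-- Fill the row `j = B₂+1` rightward. -/
lemma rowRightT (hT : Core T) (hsub : Hex A₁ A₂ B₁ B₂ C₁ C₂ ⊆ T)
    (i₀ : ℤ) (h0 : (i₀, B₂ + 1) ∈ T) (hA1 : A₁ ≤ i₀ + 1) (hC1 : C₁ ≤ i₀ + 1 - B₂)
    (hBB : B₁ ≤ B₂) :
    ∀ z, i₀ ≤ z → z ≤ A₂ → z - B₂ ≤ C₂ → (z, B₂ + 1) ∈ T := by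
  have main : ∀ z, i₀ ≤ z → z ≤ A₂ → z - B₂ ≤ C₂ → (z, B₂ + 1) ∈ T := by
    refine Int.le_induction (fun _ _ => h0) ?_
    intro i hi ih h1 h2
    have hzT : (i, B₂ + 1) ∈ T := ih (by omega) (by omega)
    have hsupp : (i + 1, B₂) ∈ T := hsub (mem_hex.mpr (by omega))
    exact (hT.rA (i + 1, B₂) (i, B₂ + 1) hsupp hzT (by omega) rfl).2
  exact main

/-- Fill the row `j = B₂+1` leftward. -/
lemma rowLeftT (hT : Core T) (hsub : Hex A₁ A₂ B₁ B₂ C₁ C₂ ⊆ T)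
    (i₀ : ℤ) (h0 : (i₀, B₂ + 1) ∈ T) (hA2 : i₀ ≤ A₂ + 2) (hC2 : i₀ - 2 - B₂ ≤ C₂)
    (hBB : B₁ ≤ B₂) :
    ∀ z, z ≤ i₀ → A₁ ≤ z - 1 → C₁ ≤ z - 1 - B₂ → (z, B₂ + 1) ∈ T := by
  have main : ∀ z, z ≤ i₀ → A₁ ≤ z - 1 → C₁ ≤ z - 1 - B₂ → (z, B₂ + 1) ∈ T := by
    refine Int.le_induction_down (fun _ _ => h0) ?_
    intro i hi ih h1 h2
    have hzT : (i, B₂ + 1) ∈ T := ih (by omega) (by omega)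
    have hsupp : (i - 2, B₂) ∈ T := hsub (mem_hex.mpr (by omega))
    have := (hT.rC (i - 2, B₂) (i, B₂ + 1) hsupp hzT (by omega) rfl).2
    have he : i - 2 + 1 = i - 1 := by ring
    rwa [he] at this
  exact main

/-- Fill the row `j = B₁-1` leftward. -/
lemma rowLeftB (hT : Core T) (hsub : Hex A₁ A₂ B₁ B₂ C₁ C₂ ⊆ T)
    (i₀ : ℤ) (h0 : (i₀, B₁ - 1) ∈ T) (hA2 : i₀ ≤ A₂ + 1) (hC2 : i₀ - 1 - B₁ ≤ C₂)
    (hBB : B₁ ≤ B₂) :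
    ∀ z, z ≤ i₀ → A₁ ≤ z → C₁ ≤ z - B₁ → (z, B₁ - 1) ∈ T := by
  have main : ∀ z, z ≤ i₀ → A₁ ≤ z → C₁ ≤ z - B₁ → (z, B₁ - 1) ∈ T := by
    refine Int.le_induction_down (fun _ _ => h0) ?_
    intro i hi ih h1 h2
    have hzT : (i, B₁ - 1) ∈ T := ih (by omega) (by omega)
    have hsupp : (i - 1, B₁) ∈ T := hsub (mem_hex.mpr (by omega))
    exact (hT.rA (i, B₁ - 1) (i - 1, B₁) hzT hsupp (by omega) (by omega)).1
  exact main

/-- Fill the row `j = B₁-1` rightward. -/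
lemma rowRightB (hT : Core T) (hsub : Hex A₁ A₂ B₁ B₂ C₁ C₂ ⊆ T)
    (i₀ : ℤ) (h0 : (i₀, B₁ - 1) ∈ T) (hA1 : A₁ ≤ i₀ + 2) (hC1 : C₁ ≤ i₀ + 2 - B₁)
    (hBB : B₁ ≤ B₂) :
    ∀ z, i₀ ≤ z → z + 1 ≤ A₂ → z + 1 - B₁ ≤ C₂ → (z, B₁ - 1) ∈ T := by
  have main : ∀ z, i₀ ≤ z → z + 1 ≤ A₂ → z + 1 - B₁ ≤ C₂ → (z, B₁ - 1) ∈ T := by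
    refine Int.le_induction (fun _ _ => h0) ?_
    intro i hi ih h1 h2
    have hzT : (i, B₁ - 1) ∈ T := ih (by omega) (by omega)
    have hsupp : (i + 2, B₁) ∈ T := hsub (mem_hex.mpr (by omega))
    exact (hT.rC (i, B₁ - 1) (i + 2, B₁) hzT hsupp rfl (by omega)).1
  exact main

/-- Fill the diagonal `i - j = C₂+1` upward (direction `(1,1)`). -/
lemma diagUpLR (hT : Core T) (hsub : Hex A₁ A₂ B₁ B₂ C₁ C₂ ⊆ T)
    (i₀ : ℤ) (h0 : (i₀, i₀ - C₂ - 1) ∈ T) (hA1 : A₁ ≤ i₀ + 1) (hB1 : B₁ ≤ i₀ - C₂ + 1)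
    (hCC : C₁ ≤ C₂) :
    ∀ z, i₀ ≤ z → z ≤ A₂ → z - C₂ ≤ B₂ → (z, z - C₂ - 1) ∈ T := by
  have main : ∀ z, i₀ ≤ z → z ≤ A₂ → z - C₂ ≤ B₂ → (z, z - C₂ - 1) ∈ T := by
    refine Int.le_induction (fun _ _ => h0) ?_
    intro i hi ih h1 h2
    have hzT : (i, i - C₂ - 1) ∈ T := ih (by omega) (by omega)
    have hsupp : (i + 1, i - C₂ + 1) ∈ T := hsub (mem_hex.mpr (by omega))
    have := (hT.rB (i, i - C₂ - 1) (i + 1, i - C₂ + 1) hzT hsupp rfl (by omega)).2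
    have he : i - C₂ - 1 + 1 = i + 1 - C₂ - 1 := by ring
    rwa [he] at this
  exact main

/-- Fill the diagonal `i - j = C₂+1` downward. -/
lemma diagDownLR (hT : Core T) (hsub : Hex A₁ A₂ B₁ B₂ C₁ C₂ ⊆ T)
    (i₀ : ℤ) (h0 : (i₀, i₀ - C₂ - 1) ∈ T) (hA2 : i₀ ≤ A₂ + 2) (hB2 : i₀ - C₂ - 2 ≤ B₂)
    (hCC : C₁ ≤ C₂) :
    ∀ z, z ≤ i₀ → A₁ ≤ z - 1 → B₁ ≤ z - C₂ - 1 → (z, z - C₂ - 1) ∈ T := by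
  have main : ∀ z, z ≤ i₀ → A₁ ≤ z - 1 → B₁ ≤ z - C₂ - 1 → (z, z - C₂ - 1) ∈ T := by
    refine Int.le_induction_down (fun _ _ => h0) ?_
    intro i hi ih h1 h2
    have hzT : (i, i - C₂ - 1) ∈ T := ih (by omega) (by omega)
    have hsupp : (i - 2, i - C₂ - 2) ∈ T := hsub (mem_hex.mpr (by omega))
    have := (hT.rC (i - 2, i - C₂ - 2) (i, i - C₂ - 1) hsupp hzT (by omega) (by omega)).1
    have he1 : i - 2 + 1 = i - 1 := by ring
    have he2 : i - C₂ - 2 = i - 1 - C₂ - 1 := by ring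
    rwa [he1, he2] at this
  exact main

/-- Fill the diagonal `i - j = C₁-1` upward. -/
lemma diagUpUL (hT : Core T) (hsub : Hex A₁ A₂ B₁ B₂ C₁ C₂ ⊆ T)
    (i₀ : ℤ) (h0 : (i₀, i₀ - C₁ + 1) ∈ T) (hA1 : A₁ ≤ i₀ + 2) (hB1 : B₁ ≤ i₀ - C₁ + 2)
    (hCC : C₁ ≤ C₂) :
    ∀ z, i₀ ≤ z → z + 1 ≤ A₂ → z - C₁ + 1 ≤ B₂ → (z, z - C₁ + 1) ∈ T := by
  have main : ∀ z, i₀ ≤ z → z + 1 ≤ A₂ → z - C₁ + 1 ≤ B₂ → (z, z - C₁ + 1) ∈ T := by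
    refine Int.le_induction (fun _ _ => h0) ?_
    intro i hi ih h1 h2
    have hzT : (i, i - C₁ + 1) ∈ T := ih (by omega) (by omega)
    have hsupp : (i + 2, i - C₁ + 2) ∈ T := hsub (mem_hex.mpr (by omega))
    have := (hT.rC (i, i - C₁ + 1) (i + 2, i - C₁ + 2) hzT hsupp rfl (by omega)).2
    have he : i - C₁ + 2 = i + 1 - C₁ + 1 := by ring
    rwa [he] at this
  exact main

/-- Fill the diagonal `i - j = C₁-1` downward. -/
lemma diagDownUL (hT : Core T) (hsub : Hex A₁ A₂ B₁ B₂ C₁ C₂ ⊆ T)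
    (i₀ : ℤ) (h0 : (i₀, i₀ - C₁ + 1) ∈ T) (hA2 : i₀ ≤ A₂ + 1) (hB2 : i₀ - C₁ - 1 ≤ B₂)
    (hCC : C₁ ≤ C₂) :
    ∀ z, z ≤ i₀ → A₁ ≤ z → B₁ ≤ z - C₁ → (z, z - C₁ + 1) ∈ T := by
  have main : ∀ z, z ≤ i₀ → A₁ ≤ z → B₁ ≤ z - C₁ → (z, z - C₁ + 1) ∈ T := by
    refine Int.le_induction_down (fun _ _ => h0) ?_
    intro i hi ih h1 h2
    have hzT : (i, i - C₁ + 1) ∈ T := ih (by omega) (by omega)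
    have hsupp : (i - 1, i - C₁ - 1) ∈ T := hsub (mem_hex.mpr (by omega))
    have := (hT.rB (i - 1, i - C₁ - 1) (i, i - C₁ + 1) hsupp hzT (by omega) (by omega)).1
    have he : i - C₁ - 1 + 1 = i - 1 - C₁ + 1 := by ring
    rwa [he] at this
  exact main

end fills


def Tight (A₁ A₂ B₁ B₂ C₁ C₂ : ℤ) : Prop :=
  (∃ p ∈ Hex A₁ A₂ B₁ B₂ C₁ C₂, p.1 = A₁) ∧
  (∃ p ∈ Hex A₁ A₂ B₁ B₂ C₁ C₂, p.1 = A₂) ∧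
  (∃ p ∈ Hex A₁ A₂ B₁ B₂ C₁ C₂, p.2 = B₁) ∧
  (∃ p ∈ Hex A₁ A₂ B₁ B₂ C₁ C₂, p.2 = B₂) ∧
  (∃ p ∈ Hex A₁ A₂ B₁ B₂ C₁ C₂, p.1 - p.2 = C₁) ∧
  (∃ p ∈ Hex A₁ A₂ B₁ B₂ C₁ C₂, p.1 - p.2 = C₂)

set_option maxHeartbeats 2000000 in
lemma expand {T : Set Pt} (hT : Core T) {A₁ A₂ B₁ B₂ C₁ C₂ : ℤ}
    (hsub : Hex A₁ A₂ B₁ B₂ C₁ C₂ ⊆ T) (ht : Tight A₁ A₂ B₁ B₂ C₁ C₂)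
    {ti tj : ℤ} (htT : (ti, tj) ∈ T) {xi xj : ℤ}
    (hx : (xi, xj) ∈ Hex A₁ A₂ B₁ B₂ C₁ C₂)
    (hadj : (ti - xi = 1 ∧ tj = xj) ∨ (ti - xi = -1 ∧ tj = xj) ∨ (ti = xi ∧ tj - xj = 1) ∨
      (ti = xi ∧ tj - xj = -1) ∨ (ti - xi = 1 ∧ tj - xj = 1) ∨ (ti - xi = -1 ∧ tj - xj = -1)) :
    Hex (min A₁ ti) (max A₂ ti) (min B₁ tj) (max B₂ tj) (min C₁ (ti - tj)) (max C₂ (ti - tj)) ⊆ T ∧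
    Tight (min A₁ ti) (max A₂ ti) (min B₁ tj) (max B₂ tj) (min C₁ (ti - tj)) (max C₂ (ti - tj)) := by
  rw [mem_hex] at hx
  obtain ⟨⟨⟨w1i, w1j⟩, hw1, he1⟩, ⟨⟨w2i, w2j⟩, hw2, he2⟩, ⟨⟨w3i, w3j⟩, hw3, he3⟩,
    ⟨⟨w4i, w4j⟩, hw4, he4⟩, ⟨⟨w5i, w5j⟩, hw5, he5⟩, ⟨⟨w6i, w6j⟩, hw6, he6⟩⟩ := ht
  rw [mem_hex] at hw1 hw2 hw3 hw4 hw5 hw6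
  replace he1 : w1i = A₁ := he1
  replace he2 : w2i = A₂ := he2
  replace he3 : w3j = B₁ := he3
  replace he4 : w4j = B₂ := he4
  replace he5 : w5i - w5j = C₁ := he5
  replace he6 : w6i - w6j = C₂ := he6
  have hAA : A₁ ≤ A₂ := by omega
  have hBB : B₁ ≤ B₂ := by omega
  have hCC : C₁ ≤ C₂ := by omega
  have q1 : A₁ ≤ C₂ + B₁ := by omega
  have q2 : C₁ + B₂ ≤ A₂ := by omega
  have q3 : C₂ + B₁ ≤ A₂ := by omega
  have q4 : A₁ ≤ C₁ + B₂ := by omega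
  have q5 : A₂ ≤ C₂ + B₂ := by omega
  have q6 : C₁ + B₁ ≤ A₁ := by omega
  have hpat : (A₁ - 1 ≤ ti ∧ ti ≤ A₂ + 1 ∧ B₁ - 1 ≤ tj ∧ tj ≤ B₂ + 1 ∧
      C₁ - 1 ≤ ti - tj ∧ ti - tj ≤ C₂ + 1) ∧
      ¬(ti = A₂ + 1 ∧ tj = B₁ - 1) ∧ ¬(ti = A₂ + 1 ∧ ti - tj = C₁ - 1) ∧
      ¬(tj = B₂ + 1 ∧ ti - tj = C₂ + 1) ∧ ¬(ti = A₁ - 1 ∧ tj = B₂ + 1) ∧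
      ¬(ti = A₁ - 1 ∧ ti - tj = C₂ + 1) ∧ ¬(tj = B₁ - 1 ∧ ti - tj = C₁ - 1) := by
    rcases hadj with h | h | h | h | h | h <;> omega
  constructor
  · intro z hz
    clear hw1 hw2 hw3 hw4 hw5 hw6 he1 he2 he3 he4 he5 he6 hx hadj
    obtain ⟨zi, zj⟩ := z
    rw [mem_hex] at hz
    have hzt : zi = ti → zj = tj → (zi, zj) ∈ T := fun h h' => by rw [h, h']; exact htT
    by_cases hin : A₁ ≤ zi ∧ zi ≤ A₂ ∧ B₁ ≤ zj ∧ zj ≤ B₂ ∧ C₁ ≤ zi - zj ∧ zi - zj ≤ C₂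
    · exact hsub (mem_hex.mpr hin)
    by_cases h1 : zi = A₂ + 1
    · have hti : ti = A₂ + 1 := by omega
      by_cases hc : zi - zj = C₂ + 1 ∨ zj = B₂ + 1
      · exact hzt (by omega) (by omega)
      · push_neg at hc
        have hbase : (A₂ + 1, tj) ∈ T := by rw [← hti]; exact htT
        rcases le_or_gt tj zj with hcmp | hcmp
        · have := colUpR hT hsub tj hbase (by omega) (by omega) (by omega)
            zj (by omega) (by omega) (by omega)
          rw [h1]; exact this
        · have := colDownR hT hsub tj hbase (by omega) (by omega) (by omega)
            zj (by omega) (by omega) (by omega)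
          rw [h1]; exact this
    by_cases h2 : zi = A₁ - 1
    · have hti : ti = A₁ - 1 := by omega
      by_cases hc : zi - zj = C₁ - 1 ∨ zj = B₁ - 1
      · exact hzt (by omega) (by omega)
      · push_neg at hc
        have hbase : (A₁ - 1, tj) ∈ T := by rw [← hti]; exact htT
        rcases le_or_gt zj tj with hcmp | hcmp
        · have := colDownL hT hsub tj hbase (by omega) (by omega) (by omega)
            zj (by omega) (by omega) (by omega)
          rw [h2]; exact this
        · have := colUpL hT hsub tj hbase (by omega) (by omega) (by omega)
            zj (by omega) (by omega) (by omega)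
          rw [h2]; exact this
    by_cases h3 : zj = B₂ + 1
    · have htj : tj = B₂ + 1 := by omega
      by_cases hc : zi - zj = C₁ - 1
      · exact hzt (by omega) (by omega)
      · have hbase : (ti, B₂ + 1) ∈ T := by rw [← htj]; exact htT
        rcases le_or_gt ti zi with hcmp | hcmp
        · have := rowRightT hT hsub ti hbase (by omega) (by omega) (by omega)
            zi (by omega) (by omega) (by omega)
          rw [h3]; exact this
        · have := rowLeftT hT hsub ti hbase (by omega) (by omega) (by omega)
            zi (by omega) (by omega) (by omega)
          rw [h3]; exact this
    by_cases h4 : zj = B₁ - 1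
    · have htj : tj = B₁ - 1 := by omega
      by_cases hc : zi - zj = C₂ + 1
      · exact hzt (by omega) (by omega)
      · have hbase : (ti, B₁ - 1) ∈ T := by rw [← htj]; exact htT
        rcases le_or_gt zi ti with hcmp | hcmp
        · have := rowLeftB hT hsub ti hbase (by omega) (by omega) (by omega)
            zi (by omega) (by omega) (by omega)
          rw [h4]; exact this
        · have := rowRightB hT hsub ti hbase (by omega) (by omega) (by omega)
            zi (by omega) (by omega) (by omega)
          rw [h4]; exact this
    by_cases h5 : zi - zj = C₂ + 1
    · have htd : ti - tj = C₂ + 1 := by omega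
      have hbase : (ti, ti - C₂ - 1) ∈ T := by
        have e : tj = ti - C₂ - 1 := by omega
        rw [← e]; exact htT
      have ezj : zj = zi - C₂ - 1 := by omega
      rcases le_or_gt ti zi with hcmp | hcmp
      · have := diagUpLR hT hsub ti hbase (by omega) (by omega) (by omega)
          zi (by omega) (by omega) (by omega)
        rw [ezj]; exact this
      · have := diagDownLR hT hsub ti hbase (by omega) (by omega) (by omega)
          zi (by omega) (by omega) (by omega)
        rw [ezj]; exact this
    by_cases h6 : zi - zj = C₁ - 1
    · have htd : ti - tj = C₁ - 1 := by omega
      have hbase : (ti, ti - C₁ + 1) ∈ T := by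
        have e : tj = ti - C₁ + 1 := by omega
        rw [← e]; exact htT
      have ezj : zj = zi - C₁ + 1 := by omega
      rcases le_or_gt ti zi with hcmp | hcmp
      · have := diagUpUL hT hsub ti hbase (by omega) (by omega) (by omega)
          zi (by omega) (by omega) (by omega)
        rw [ezj]; exact this
      · have := diagDownUL hT hsub ti hbase (by omega) (by omega) (by omega)
          zi (by omega) (by omega) (by omega)
        rw [ezj]; exact this
    exact absurd (by omega) hin
  · refine ⟨?_, ?_, ?_, ?_, ?_, ?_⟩
    · by_cases h : ti ≤ A₁
      · refine ⟨(ti, tj), mem_hex.mpr (by omega), ?_⟩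
        show ti = min A₁ ti; omega
      · refine ⟨(w1i, w1j), mem_hex.mpr (by omega), ?_⟩
        show w1i = min A₁ ti; omega
    · by_cases h : A₂ ≤ ti
      · refine ⟨(ti, tj), mem_hex.mpr (by omega), ?_⟩
        show ti = max A₂ ti; omega
      · refine ⟨(w2i, w2j), mem_hex.mpr (by omega), ?_⟩
        show w2i = max A₂ ti; omega
    · by_cases h : tj ≤ B₁
      · refine ⟨(ti, tj), mem_hex.mpr (by omega), ?_⟩
        show tj = min B₁ tj; omega
      · refine ⟨(w3i, w3j), mem_hex.mpr (by omega), ?_⟩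
        show w3j = min B₁ tj; omega
    · by_cases h : B₂ ≤ tj
      · refine ⟨(ti, tj), mem_hex.mpr (by omega), ?_⟩
        show tj = max B₂ tj; omega
      · refine ⟨(w4i, w4j), mem_hex.mpr (by omega), ?_⟩
        show w4j = max B₂ tj; omega
    · by_cases h : ti - tj ≤ C₁
      · refine ⟨(ti, tj), mem_hex.mpr (by omega), ?_⟩
        show ti - tj = min C₁ (ti - tj); omega
      · refine ⟨(w5i, w5j), mem_hex.mpr (by omega), ?_⟩
        show w5i - w5j = min C₁ (ti - tj); omega
    · by_cases h : C₂ ≤ ti - tj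
      · refine ⟨(ti, tj), mem_hex.mpr (by omega), ?_⟩
        show ti - tj = max C₂ (ti - tj); omega
      · refine ⟨(w6i, w6j), mem_hex.mpr (by omega), ?_⟩
        show w6i - w6j = max C₂ (ti - tj); omega

end QGC


namespace QGC

def Step (T : Set Pt) (a b : Pt) : Prop :=
  a ∈ T ∧ b ∈ T ∧
    ((b.1 - a.1 = 1 ∧ b.2 = a.2) ∨ (b.1 - a.1 = -1 ∧ b.2 = a.2) ∨
     (b.1 = a.1 ∧ b.2 - a.2 = 1) ∨ (b.1 = a.1 ∧ b.2 - a.2 = -1) ∨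
     (b.1 - a.1 = 1 ∧ b.2 - a.2 = 1) ∨ (b.1 - a.1 = -1 ∧ b.2 - a.2 = -1))

lemma reach {T : Set Pt} (hT : Core T) {r q : Pt} (h : Relation.ReflTransGen (Step T) r q) :
    ∀ A₁ A₂ B₁ B₂ C₁ C₂ : ℤ, Hex A₁ A₂ B₁ B₂ C₁ C₂ ⊆ T →
      Tight A₁ A₂ B₁ B₂ C₁ C₂ → r ∈ Hex A₁ A₂ B₁ B₂ C₁ C₂ →
    ∃ D₁ D₂ E₁ E₂ F₁ F₂ : ℤ, Hex D₁ D₂ E₁ E₂ F₁ F₂ ⊆ T ∧ Tight D₁ D₂ E₁ E₂ F₁ F₂ ∧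
      Hex A₁ A₂ B₁ B₂ C₁ C₂ ⊆ Hex D₁ D₂ E₁ E₂ F₁ F₂ ∧ q ∈ Hex D₁ D₂ E₁ E₂ F₁ F₂ := by
  induction h with
  | refl =>
    intro A₁ A₂ B₁ B₂ C₁ C₂ hsub ht hr
    exact ⟨A₁, A₂, B₁, B₂, C₁, C₂, hsub, ht, subset_rfl, hr⟩
  | @tail m c _ hstep ih =>
    intro A₁ A₂ B₁ B₂ C₁ C₂ hsub ht hr
    obtain ⟨D₁, D₂, E₁, E₂, F₁, F₂, hsub', ht', hmono, hm⟩ := ih A₁ A₂ B₁ B₂ C₁ C₂ hsub ht hr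
    obtain ⟨hmT, hcT, hdiff⟩ := hstep
    obtain ⟨mi, mj⟩ := m
    obtain ⟨ci, cj⟩ := c
    have hexp := expand hT hsub' ht' hcT hm (by exact hdiff)
    refine ⟨min D₁ ci, max D₂ ci, min E₁ cj, max E₂ cj, min F₁ (ci - cj), max F₂ (ci - cj),
      hexp.1, hexp.2, ?_, ?_⟩
    · refine hmono.trans ?_
      intro p hp
      obtain ⟨u, v⟩ := p
      rw [mem_hex] at hp ⊢
      omega
    · exact mem_hex.mpr (by omega)

lemma hexify {T : Set Pt} (hT : Core T)
    (hconn : ∀ p ∈ T, ∀ q ∈ T, Relation.ReflTransGen (Step T) p q)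
    {x : Pt}
    (h1 : ∃ p ∈ T, p.1 ≤ x.1) (h2 : ∃ p ∈ T, x.1 ≤ p.1)
    (h3 : ∃ p ∈ T, p.2 ≤ x.2) (h4 : ∃ p ∈ T, x.2 ≤ p.2)
    (h5 : ∃ p ∈ T, p.1 - p.2 ≤ x.1 - x.2) (h6 : ∃ p ∈ T, x.1 - x.2 ≤ p.1 - p.2) :
    x ∈ T := by
  obtain ⟨⟨a1, b1⟩, hp1, hv1⟩ := h1
  obtain ⟨⟨a2, b2⟩, hp2, hv2⟩ := h2
  obtain ⟨⟨a3, b3⟩, hp3, hv3⟩ := h3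
  obtain ⟨⟨a4, b4⟩, hp4, hv4⟩ := h4
  obtain ⟨⟨a5, b5⟩, hp5, hv5⟩ := h5
  obtain ⟨⟨a6, b6⟩, hp6, hv6⟩ := h6
  obtain ⟨u, v⟩ := x
  replace hv1 : a1 ≤ u := hv1
  replace hv2 : u ≤ a2 := hv2
  replace hv3 : b3 ≤ v := hv3
  replace hv4 : v ≤ b4 := hv4
  replace hv5 : a5 - b5 ≤ u - v := hv5
  replace hv6 : u - v ≤ a6 - b6 := hv6
  have hsub0 : Hex a1 a1 b1 b1 (a1 - b1) (a1 - b1) ⊆ T := by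
    intro p hp
    obtain ⟨s, t⟩ := p
    rw [mem_hex] at hp
    have hs : s = a1 := by omega
    have ht' : t = b1 := by omega
    rw [hs, ht']; exact hp1
  have ht0 : Tight a1 a1 b1 b1 (a1 - b1) (a1 - b1) :=
    ⟨⟨(a1, b1), mem_hex.mpr (by omega), rfl⟩, ⟨(a1, b1), mem_hex.mpr (by omega), rfl⟩,
     ⟨(a1, b1), mem_hex.mpr (by omega), rfl⟩, ⟨(a1, b1), mem_hex.mpr (by omega), rfl⟩,
     ⟨(a1, b1), mem_hex.mpr (by omega), rfl⟩, ⟨(a1, b1), mem_hex.mpr (by omega), rfl⟩⟩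
  -- absorb p2
  obtain ⟨D₁, D₂, E₁, E₂, F₁, F₂, hs2, ht2, hm2, hq2⟩ :=
    reach hT (hconn _ hp1 _ hp2) a1 a1 b1 b1 (a1 - b1) (a1 - b1) hsub0 ht0
      (mem_hex.mpr (by omega))
  have hin1 : (a1, b1) ∈ Hex D₁ D₂ E₁ E₂ F₁ F₂ := hm2 (mem_hex.mpr (by omega))
  -- absorb p3
  obtain ⟨D₁', D₂', E₁', E₂', F₁', F₂', hs3, ht3, hm3, hq3⟩ :=
    reach hT (hconn _ hp1 _ hp3) D₁ D₂ E₁ E₂ F₁ F₂ hs2 ht2 hin1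
  replace hin1 := hm3 hin1
  replace hq2 := hm3 hq2
  -- absorb p4
  obtain ⟨D₁'', D₂'', E₁'', E₂'', F₁'', F₂'', hs4, ht4, hm4, hq4⟩ :=
    reach hT (hconn _ hp1 _ hp4) D₁' D₂' E₁' E₂' F₁' F₂' hs3 ht3 hin1
  replace hin1 := hm4 hin1
  replace hq2 := hm4 hq2
  replace hq3 := hm4 hq3
  -- absorb p5
  obtain ⟨G₁, G₂, H₁, H₂, I₁, I₂, hs5, ht5, hm5, hq5⟩ :=
    reach hT (hconn _ hp1 _ hp5) D₁'' D₂'' E₁'' E₂'' F₁'' F₂'' hs4 ht4 hin1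
  replace hin1 := hm5 hin1
  replace hq2 := hm5 hq2
  replace hq3 := hm5 hq3
  replace hq4 := hm5 hq4
  -- absorb p6
  obtain ⟨J₁, J₂, K₁, K₂, L₁, L₂, hs6, ht6, hm6, hq6⟩ :=
    reach hT (hconn _ hp1 _ hp6) G₁ G₂ H₁ H₂ I₁ I₂ hs5 ht5 hin1
  replace hin1 := hm6 hin1
  replace hq2 := hm6 hq2
  replace hq3 := hm6 hq3
  replace hq4 := hm6 hq4
  replace hq5 := hm6 hq5
  rw [mem_hex] at hin1 hq2 hq3 hq4 hq5 hq6
  exact hs6 (mem_hex.mpr (by omega))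

lemma botBound {T : Set Pt} (hne : T.Nonempty) (f : Pt → ℤ) :
    ∃ a : WithBot ℤ, (∀ p ∈ T, a ≤ (f p : WithBot ℤ)) ∧
      (∀ x : ℤ, a ≤ (x : WithBot ℤ) → ∃ p ∈ T, f p ≤ x) := by
  by_cases hbd : ∃ m : ℤ, ∀ p ∈ T, m ≤ f p
  · obtain ⟨m, hm⟩ := hbd
    obtain ⟨lb, ⟨p, hp, hfp⟩, hmin⟩ :=
      Int.exists_least_of_bdd (P := fun y => ∃ p ∈ T, f p = y)
        ⟨m, by rintro z ⟨p, hp, rfl⟩; exact hm p hp⟩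
        ⟨f hne.choose, hne.choose, hne.choose_spec, rfl⟩
    refine ⟨(lb : WithBot ℤ), ?_, ?_⟩
    · intro p' hp'
      have := hmin (f p') ⟨p', hp', rfl⟩
      exact_mod_cast this
    · intro x hx
      refine ⟨p, hp, ?_⟩
      have hlx : lb ≤ x := by exact_mod_cast hx
      omega
  · refine ⟨⊥, fun _ _ => bot_le, ?_⟩
    intro x _
    push_neg at hbd
    obtain ⟨p, hp, hlt⟩ := hbd x
    exact ⟨p, hp, by omega⟩

lemma topBound {T : Set Pt} (hne : T.Nonempty) (f : Pt → ℤ) :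
    ∃ a : WithTop ℤ, (∀ p ∈ T, (f p : WithTop ℤ) ≤ a) ∧
      (∀ x : ℤ, (x : WithTop ℤ) ≤ a → ∃ p ∈ T, x ≤ f p) := by
  by_cases hbd : ∃ m : ℤ, ∀ p ∈ T, f p ≤ m
  · obtain ⟨m, hm⟩ := hbd
    obtain ⟨ub, ⟨p, hp, hfp⟩, hmax⟩ :=
      Int.exists_greatest_of_bdd (P := fun y => ∃ p ∈ T, f p = y)
        ⟨m, by rintro z ⟨p, hp, rfl⟩; exact hm p hp⟩
        ⟨f hne.choose, hne.choose, hne.choose_spec, rfl⟩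
    refine ⟨(ub : WithTop ℤ), ?_, ?_⟩
    · intro p' hp'
      have := hmax (f p') ⟨p', hp', rfl⟩
      exact_mod_cast this
    · intro x hx
      refine ⟨p, hp, ?_⟩
      have hlx : x ≤ ub := by exact_mod_cast hx
      omega
  · refine ⟨⊤, fun _ _ => le_top, ?_⟩
    intro x _
    push_neg at hbd
    obtain ⟨p, hp, hlt⟩ := hbd x
    exact ⟨p, hp, by omega⟩

theorem coreMain {T : Set Pt} (hT : Core T)
    (hconn : ∀ p ∈ T, ∀ q ∈ T, Relation.ReflTransGen (Step T) p q) :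
    ∃ (a₁ b₁ c₁ : WithBot ℤ) (a₂ b₂ c₂ : WithTop ℤ),
      T = {p : Pt | a₁ ≤ (p.1 : WithBot ℤ) ∧ (p.1 : WithTop ℤ) ≤ a₂ ∧
        b₁ ≤ (p.2 : WithBot ℤ) ∧ (p.2 : WithTop ℤ) ≤ b₂ ∧
        c₁ ≤ ((p.1 - p.2 : ℤ) : WithBot ℤ) ∧ ((p.1 - p.2 : ℤ) : WithTop ℤ) ≤ c₂} := by
  rcases Set.eq_empty_or_nonempty T with he | hne
  · refine ⟨((1 : ℤ) : WithBot ℤ), 0, 0, ((0 : ℤ) : WithTop ℤ), 0, 0, ?_⟩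
    rw [he]
    ext p
    simp only [Set.mem_empty_iff_false, false_iff, Set.mem_setOf_eq, not_and]
    intro h1 h2
    have e1 : (1 : ℤ) ≤ p.1 := by exact_mod_cast h1
    have e2 : p.1 ≤ (0 : ℤ) := by exact_mod_cast h2
    omega
  · obtain ⟨a₁, ha₁, ha₁'⟩ := botBound hne (fun p => p.1)
    obtain ⟨a₂, ha₂, ha₂'⟩ := topBound hne (fun p => p.1)
    obtain ⟨b₁, hb₁, hb₁'⟩ := botBound hne (fun p => p.2)
    obtain ⟨b₂, hb₂, hb₂'⟩ := topBound hne (fun p => p.2)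
    obtain ⟨c₁, hc₁, hc₁'⟩ := botBound hne (fun p => p.1 - p.2)
    obtain ⟨c₂, hc₂, hc₂'⟩ := topBound hne (fun p => p.1 - p.2)
    refine ⟨a₁, b₁, c₁, a₂, b₂, c₂, ?_⟩
    ext p
    simp only [Set.mem_setOf_eq]
    constructor
    · intro hp
      exact ⟨ha₁ p hp, ha₂ p hp, hb₁ p hp, hb₂ p hp, hc₁ p hp, hc₂ p hp⟩
    · rintro ⟨g1, g2, g3, g4, g5, g6⟩
      obtain ⟨p1, hp1, hv1⟩ := ha₁' p.1 g1
      obtain ⟨p2, hp2, hv2⟩ := ha₂' p.1 g2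
      obtain ⟨p3, hp3, hv3⟩ := hb₁' p.2 g3
      obtain ⟨p4, hp4, hv4⟩ := hb₂' p.2 g4
      obtain ⟨p5, hp5, hv5⟩ := hc₁' (p.1 - p.2) g5
      obtain ⟨p6, hp6, hv6⟩ := hc₂' (p.1 - p.2) g6
      exact hexify hT hconn ⟨p1, hp1, hv1⟩ ⟨p2, hp2, hv2⟩ ⟨p3, hp3, hv3⟩
        ⟨p4, hp4, hv4⟩ ⟨p5, hp5, hv5⟩ ⟨p6, hp6, hv6⟩

end QGC



open scoped Pointwise ENNReal

/-- for `k − ℓ = 1`, a connected `S ⊆ 𝕃` satisfying the three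
completion rules is a (possibly unbounded) hexagon:
`S = {i w₁ + j w₂ : α₁ ≤ i ≤ α₂, β₁ ≤ j ≤ β₂, γ₁ ≤ i − j ≤ γ₂}` with bounds in
`ℤ ∪ {−∞, +∞}`. -/
theorem quasi_grid_characterization
    (k l : ℤ) (hl : 0 ≤ l) (hkl : k = l + 1)
    (S : Set Z2) (hS : S ⊆ ZLat k l)
    (hconn : GConnected k l S)
    (ha : ∀ s ∈ S, ∀ s' ∈ S, s - s' = wTwo l - wOne k →
      s' - wOne k ∈ S ∧ s' + wTwo l ∈ S)
    (hb : ∀ s ∈ S, ∀ s' ∈ S, s - s' = wOne k + (2 : ℤ) • wTwo l →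
      s' + wTwo l ∈ S ∧ s' + wOne k + wTwo l ∈ S)
    (hc : ∀ s ∈ S, ∀ s' ∈ S, s - s' = (2 : ℤ) • wOne k + wTwo l →
      s' + wOne k ∈ S ∧ s' + wOne k + wTwo l ∈ S) :
    ∃ (a₁ b₁ c₁ : WithBot ℤ) (a₂ b₂ c₂ : WithTop ℤ),
      S = {p : Z2 | ∃ i j : ℤ, p = i • wOne k + j • wTwo l ∧
        a₁ ≤ (i : WithBot ℤ) ∧ (i : WithTop ℤ) ≤ a₂ ∧
        b₁ ≤ (j : WithBot ℤ) ∧ (j : WithTop ℤ) ≤ b₂ ∧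
        c₁ ≤ ((i - j : ℤ) : WithBot ℤ) ∧ ((i - j : ℤ) : WithTop ℤ) ≤ c₂} := by
  classical
  set φ : QGC.Pt → Z2 := fun p => (p.1 * (-k - 1) + p.2 * (l + 1), p.1 + p.2) with hφdef
  have hφ : ∀ i j : ℤ, i • wOne k + j • wTwo l = φ (i, j) := by
    intro i j
    simp only [hφdef, wOne, wTwo, Prod.smul_mk, smul_eq_mul, Prod.mk_add_mk, Prod.mk.injEq]
    exact ⟨trivial, by ring⟩
  have hinj : ∀ p q : QGC.Pt, φ p = φ q → p = q := by
    rintro ⟨p1, p2⟩ ⟨q1, q2⟩ h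
    simp only [hφdef, Prod.mk.injEq] at h
    obtain ⟨h1, h2⟩ := h
    have key : (p1 - q1) * (k + l + 2) = 0 := by linear_combination (-1 : ℤ) * h1 + (l + 1) * h2
    have hk : p1 - q1 = 0 ∨ (k + l + 2 : ℤ) = 0 := mul_eq_zero.mp key
    have e1 : p1 = q1 := by rcases hk with h | h <;> omega
    have e2 : p2 = q2 := by omega
    rw [e1, e2]
  have hw1 : wOne k = φ (1, 0) := by
    simp only [hφdef, wOne, Prod.mk.injEq]; constructor <;> ring
  have hw1' : -(wOne k) = φ (-1, 0) := by
    simp only [hφdef, wOne, Prod.neg_mk, Prod.mk.injEq]; constructor <;> ring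
  have hw2 : wTwo l = φ (0, 1) := by
    simp only [hφdef, wTwo, Prod.mk.injEq]; constructor <;> ring
  have hw2' : -(wTwo l) = φ (0, -1) := by
    simp only [hφdef, wTwo, Prod.neg_mk, Prod.mk.injEq]; constructor <;> ring
  have hw12 : wOne k + wTwo l = φ (1, 1) := by
    simp only [hφdef, wOne, wTwo, Prod.mk_add_mk, Prod.mk.injEq]; exact ⟨by ring, trivial⟩
  have hw12' : -(wOne k + wTwo l) = φ (-1, -1) := by
    simp only [hφdef, wOne, wTwo, Prod.mk_add_mk, Prod.neg_mk, Prod.mk.injEq]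
    constructor <;> ring
  have hco : ∀ p q d : QGC.Pt, φ q - φ p = φ d → q.1 - p.1 = d.1 ∧ q.2 - p.2 = d.2 := by
    intro p q d h
    have h' : φ (q.1 - p.1, q.2 - p.2) = φ d := by
      rw [← h]
      simp only [hφdef, Prod.mk_sub_mk, Prod.mk.injEq]
      constructor <;> ring
    have hpq := hinj _ _ h'
    exact ⟨congrArg Prod.fst hpq, congrArg Prod.snd hpq⟩
  set TT : Set QGC.Pt := {p | φ p ∈ S} with hTTdef
  have hCoreT : QGC.Core TT := by
    constructor
    · rintro ⟨a1, a2⟩ ⟨b1, b2⟩ haT hbT h1 h2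
      replace h1 : b1 + 1 = a1 := h1
      replace h2 : b2 = a2 + 1 := h2
      have hsa : φ (a1, a2) ∈ S := haT
      have hsb : φ (b1, b2) ∈ S := hbT
      have hdiffeq : φ (b1, b2) - φ (a1, a2) = wTwo l - wOne k := by
        simp only [hφdef, wOne, wTwo, Prod.mk_sub_mk, Prod.mk.injEq]
        constructor <;> (rw [← h1, h2]; ring)
      have key := ha (φ (b1, b2)) hsb (φ (a1, a2)) hsa hdiffeq
      constructor
      · show φ (b1, a2) ∈ S
        have e : φ (b1, a2) = φ (a1, a2) - wOne k := by
          simp only [hφdef, wOne, Prod.mk_sub_mk, Prod.mk.injEq]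
          constructor <;> (rw [← h1]; ring)
        rw [e]; exact key.1
      · show φ (a1, b2) ∈ S
        have e : φ (a1, b2) = φ (a1, a2) + wTwo l := by
          simp only [hφdef, wTwo, Prod.mk_add_mk, Prod.mk.injEq]
          constructor <;> (rw [h2]; ring)
        rw [e]; exact key.2
    · rintro ⟨a1, a2⟩ ⟨b1, b2⟩ haT hbT h1 h2
      replace h1 : b1 = a1 + 1 := h1
      replace h2 : b2 = a2 + 2 := h2
      have hsa : φ (a1, a2) ∈ S := haT
      have hsb : φ (b1, b2) ∈ S := hbT
      have hdiffeq : φ (b1, b2) - φ (a1, a2) = wOne k + (2 : ℤ) • wTwo l := by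
        simp only [hφdef, wOne, wTwo, Prod.mk_sub_mk, Prod.smul_mk, smul_eq_mul,
          Prod.mk_add_mk, Prod.mk.injEq]
        constructor <;> (rw [h1, h2]; ring)
      have key := hb (φ (b1, b2)) hsb (φ (a1, a2)) hsa hdiffeq
      constructor
      · show φ (a1, a2 + 1) ∈ S
        have e : φ (a1, a2 + 1) = φ (a1, a2) + wTwo l := by
          simp only [hφdef, wTwo, Prod.mk_add_mk, Prod.mk.injEq]
          constructor <;> ring
        rw [e]; exact key.1
      · show φ (b1, a2 + 1) ∈ S
        have e : φ (b1, a2 + 1) = φ (a1, a2) + wOne k + wTwo l := by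
          simp only [hφdef, wOne, wTwo, Prod.mk_add_mk, Prod.mk.injEq]
          constructor <;> (rw [h1]; ring)
        rw [e]; exact key.2
    · rintro ⟨a1, a2⟩ ⟨b1, b2⟩ haT hbT h1 h2
      replace h1 : b1 = a1 + 2 := h1
      replace h2 : b2 = a2 + 1 := h2
      have hsa : φ (a1, a2) ∈ S := haT
      have hsb : φ (b1, b2) ∈ S := hbT
      have hdiffeq : φ (b1, b2) - φ (a1, a2) = (2 : ℤ) • wOne k + wTwo l := by
        simp only [hφdef, wOne, wTwo, Prod.mk_sub_mk, Prod.smul_mk, smul_eq_mul,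
          Prod.mk_add_mk, Prod.mk.injEq]
        constructor <;> (rw [h1, h2]; ring)
      have key := hc (φ (b1, b2)) hsb (φ (a1, a2)) hsa hdiffeq
      constructor
      · show φ (a1 + 1, a2) ∈ S
        have e : φ (a1 + 1, a2) = φ (a1, a2) + wOne k := by
          simp only [hφdef, wOne, Prod.mk_add_mk, Prod.mk.injEq]
          constructor <;> ring
        rw [e]; exact key.1
      · show φ (a1 + 1, b2) ∈ S
        have e : φ (a1 + 1, b2) = φ (a1, a2) + wOne k + wTwo l := by
          simp only [hφdef, wOne, wTwo, Prod.mk_add_mk, Prod.mk.injEq]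
          constructor <;> (rw [h2]; ring)
        rw [e]; exact key.2
  have htrans : ∀ p : QGC.Pt, ∀ s2 : Z2, Relation.ReflTransGen (adjStep k l S) (φ p) s2 →
      ∀ q : QGC.Pt, φ q = s2 → Relation.ReflTransGen (QGC.Step TT) p q := by
    intro p s2 h
    induction h with
    | refl =>
      intro q hq
      rw [hinj q p hq]
    | @tail s3 s4 hmid hstep ih =>
      intro q hq
      obtain ⟨hs3S, hs4S, hdiff⟩ := hstep
      obtain ⟨i, j, hij⟩ := hS hs3S
      have hs3 : φ (i, j) = s3 := (hφ i j).symm.trans hij.symm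
      refine Relation.ReflTransGen.tail (ih (i, j) hs3) ?_
      have hijT : (i, j) ∈ TT := by show φ (i, j) ∈ S; rw [hs3]; exact hs3S
      have hqT : q ∈ TT := by show φ q ∈ S; rw [hq]; exact hs4S
      refine ⟨hijT, hqT, ?_⟩
      have hsub : φ q - φ (i, j) = s4 - s3 := by rw [hq, hs3]
      rcases hdiff with h | h | h | h | ⟨-, h | h⟩
      · have e := hco (i, j) q (1, 0) (by rw [hsub, h, hw1])
        exact Or.inl ⟨by omega, by omega⟩
      · have e := hco (i, j) q (-1, 0) (by rw [hsub, h, hw1'])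
        exact Or.inr (Or.inl ⟨by omega, by omega⟩)
      · have e := hco (i, j) q (0, 1) (by rw [hsub, h, hw2])
        exact Or.inr (Or.inr (Or.inl ⟨by omega, by omega⟩))
      · have e := hco (i, j) q (0, -1) (by rw [hsub, h, hw2'])
        exact Or.inr (Or.inr (Or.inr (Or.inl ⟨by omega, by omega⟩)))
      · have e := hco (i, j) q (1, 1) (by rw [hsub, h, hw12])
        exact Or.inr (Or.inr (Or.inr (Or.inr (Or.inl ⟨by omega, by omega⟩))))
      · have e := hco (i, j) q (-1, -1) (by rw [hsub, h, hw12'])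
        exact Or.inr (Or.inr (Or.inr (Or.inr (Or.inr ⟨by omega, by omega⟩))))
  have hconnT : ∀ p ∈ TT, ∀ q ∈ TT, Relation.ReflTransGen (QGC.Step TT) p q := by
    intro p hp q hq
    exact htrans p (φ q) (hconn (φ p) hp (φ q) hq) q rfl
  obtain ⟨a₁, b₁, c₁, a₂, b₂, c₂, hdesc⟩ := QGC.coreMain hCoreT hconnT
  refine ⟨a₁, b₁, c₁, a₂, b₂, c₂, ?_⟩
  ext s
  simp only [Set.mem_setOf_eq]
  constructor
  · intro hsS
    obtain ⟨i, j, hij⟩ := hS hsS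
    have hphis : φ (i, j) ∈ S := by
      rw [← hφ i j]; rw [← hij]; exact hsS
    have hijT : (i, j) ∈ TT := hphis
    rw [hdesc] at hijT
    simp only [Set.mem_setOf_eq] at hijT
    exact ⟨i, j, hij, hijT.1, hijT.2.1, hijT.2.2.1, hijT.2.2.2.1,
      hijT.2.2.2.2.1, hijT.2.2.2.2.2⟩
  · rintro ⟨i, j, hij, g1, g2, g3, g4, g5, g6⟩
    have hmem : (i, j) ∈ TT := by
      rw [hdesc]
      simp only [Set.mem_setOf_eq]
      exact ⟨g1, g2, g3, g4, g5, g6⟩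
    have hres : φ (i, j) ∈ S := hmem
    rw [hij, hφ i j]
    exact hres
end

section
/- Let S, T ⊆ ℤ^d be finite nonempty sets such that the sum of S and T is direct. Then the sum of S and −T is also direct, and the sets K := S ⊕ T and L := S ⊕ (−T) satisfy g_K = g_L. Moreover, [K] ≠ [L] if and only if neither S nor T is centrally symmetric. -/
open scoped Pointwise

noncomputable section

/-- The covariogram of a finite `K ⊆ ℤ^d`: `u ↦ |K ∩ (K + u)|`. -/
def covG {d : ℕ} (K : Set (Fin d → ℤ)) (u : Fin d → ℤ) : ℕ :=
  (K ∩ ((fun x => x + u) '' K)).ncard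

/-- `L ∈ [K]`: `L` is a translate of `K` or a translate of `−K`. -/
def sameClassG {d : ℕ} (K L : Set (Fin d → ℤ)) : Prop :=
  ∃ t : Fin d → ℤ, L = (fun x => x + t) '' K ∨ L = (fun x => t - x) '' K

/-- `A ⊆ ℤ^d` is centrally symmetric if `A = −A + t` for some `t`. -/
def centSymG {d : ℕ} (A : Set (Fin d → ℤ)) : Prop :=
  ∃ t : Fin d → ℤ, A = (fun x => t - x) '' A

/-- The Minkowski sum of `S` and `T` is direct. -/
def directSumG {d : ℕ} (S T : Set (Fin d → ℤ)) : Prop :=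
  ∀ s ∈ S, ∀ s' ∈ S, ∀ t ∈ T, ∀ t' ∈ T, s + t = s' + t' → s = s' ∧ t = t'

section DSHAux

variable {d : ℕ}

/-- strict lex comparison -/
def llt (a b : Fin d → ℤ) : Prop := toLex a < toLex b

lemma llt_irrefl (a : Fin d → ℤ) : ¬ llt a a := by
  intro h
  exact (Pi.Lex.isStrictOrder (ι := Fin d) (β := fun _ => ℤ)).irrefl (toLex a) h

lemma llt_trans {a b c : Fin d → ℤ} (h1 : llt a b) (h2 : llt b c) : llt a c :=
  (Pi.Lex.isStrictOrder (ι := Fin d) (β := fun _ => ℤ)).trans _ _ _ h1 h2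

lemma llt_trichot (a b : Fin d → ℤ) : a = b ∨ llt a b ∨ llt b a := by
  have := (Pi.isTrichotomous_lex (fun i j : Fin d => i < j)
    (fun {_} => ((· < ·) : ℤ → ℤ → Prop)) (IsWellFounded.wf)).trichotomous a b
  tauto

lemma llt_add_left (c : Fin d → ℤ) {a b : Fin d → ℤ} (h : llt a b) : llt (c + a) (c + b) := by
  obtain ⟨i, h1, h2⟩ := h
  exact ⟨i, fun j hj => by simpa using h1 j hj, by simpa using h2⟩

lemma exists_llt_max (A : Set (Fin d → ℤ)) (hfin : A.Finite) (hne : A.Nonempty) :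
    ∃ m ∈ A, ∀ y ∈ A, ¬ llt m y := by
  letI : LinearOrder (Lex (Fin d → ℤ)) :=
    haveI hw : WellFoundedLT (Fin d) := IsWellOrder.toIsWellFounded
    @Pi.Lex.linearOrder (Fin d) (fun _ => ℤ) _ hw _
  obtain ⟨m, hm, hmax⟩ := Set.exists_max_image A toLex hfin hne
  exact ⟨m, hm, fun y hy hlt => absurd (hmax y hy) (not_le_of_gt hlt)⟩

lemma cancelAux {S A B : Set (Fin d → ℤ)}
    (hdA : directSumG S A) (h : S + A = S + B)
    {m : Fin d → ℤ} (hmA : m ∈ A) (hmB : m ∉ B)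
    (hmax : ∀ y, ((y ∈ A ∧ y ∉ B) ∨ (y ∈ B ∧ y ∉ A)) → ¬ llt m y)
    {s₀ : Fin d → ℤ} (hs₀ : s₀ ∈ S)
    (hsmax : ∀ s ∈ S, ¬ llt s₀ s) : False := by
  have hmem : s₀ + m ∈ S + B := by rw [← h]; exact Set.add_mem_add hs₀ hmA
  rcases Set.mem_add.mp hmem with ⟨s, hs, b, hb, hsb⟩
  rcases llt_trichot s s₀ with hss | hlt | hgt
  · subst hss
    have hbm : b = m := add_left_cancel hsb
    exact hmB (hbm ▸ hb)
  · rcases llt_trichot b m with hbm | hlt2 | hgt2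
    · subst hbm
      have : s = s₀ := add_right_cancel hsb
      rw [this] at hlt; exact llt_irrefl _ hlt
    · have h1 : llt (s + b) (s + m) := llt_add_left s hlt2
      have h2 : llt (s + m) (s₀ + m) := by
        have := llt_add_left m hlt
        rwa [add_comm m s, add_comm m s₀] at this
      have h3 := llt_trans h1 h2
      rw [hsb] at h3; exact llt_irrefl _ h3
    · have hbA : b ∈ A := by
        by_contra hbA
        exact hmax b (Or.inr ⟨hb, hbA⟩) hgt2
      obtain ⟨hss', _⟩ := hdA s hs s₀ hs₀ b hbA m hmA hsb
      rw [hss'] at hlt; exact llt_irrefl _ hlt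
  · exact hsmax s hs hgt

lemma cancelG {S A B : Set (Fin d → ℤ)} (hS : S.Finite) (hSne : S.Nonempty)
    (hA : A.Finite) (hB : B.Finite)
    (hdA : directSumG S A) (hdB : directSumG S B)
    (h : S + A = S + B) : A = B := by
  by_contra hne
  have hΔfin : ((A \ B) ∪ (B \ A)).Finite :=
    (hA.subset Set.diff_subset).union (hB.subset Set.diff_subset)
  have hΔne : ((A \ B) ∪ (B \ A)).Nonempty := by
    rw [Set.nonempty_iff_ne_empty]
    intro h0
    rw [Set.union_empty_iff] at h0
    exact hne (Set.Subset.antisymm (Set.diff_eq_empty.mp h0.1) (Set.diff_eq_empty.mp h0.2))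
  obtain ⟨m, hmΔ, hmax⟩ := exists_llt_max _ hΔfin hΔne
  obtain ⟨s₀, hs₀, hsmax⟩ := exists_llt_max S hS hSne
  have hmax' : ∀ y, ((y ∈ A ∧ y ∉ B) ∨ (y ∈ B ∧ y ∉ A)) → ¬ llt m y := by
    intro y hy
    refine hmax y ?_
    rcases hy with ⟨h1, h2⟩ | ⟨h1, h2⟩
    · exact Or.inl ⟨h1, h2⟩
    · exact Or.inr ⟨h1, h2⟩
  rcases hmΔ with ⟨hmA, hmB⟩ | ⟨hmB, hmA⟩
  · exact cancelAux hdA h hmA hmB hmax' hs₀ hsmax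
  · have hmax'' : ∀ y, ((y ∈ B ∧ y ∉ A) ∨ (y ∈ A ∧ y ∉ B)) → ¬ llt m y := by
      intro y hy; exact hmax' y hy.symm
    exact cancelAux hdB h.symm hmB hmA hmax'' hs₀ hsmax

end DSHAux

/-- if the sum of finite nonempty `S, T ⊆ ℤ^d` is direct, then so is
the sum of `S` and `−T`, the sets `K = S ⊕ T` and `L = S ⊕ (−T)` have equal
covariograms, and `[K] ≠ [L]` iff neither `S` nor `T` is centrally symmetric. -/
theorem direct_sum_homometry
    (d : ℕ) (S T : Set (Fin d → ℤ))
    (hSfin : S.Finite) (hTfin : T.Finite)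
    (hSne : S.Nonempty) (hTne : T.Nonempty)
    (hdir : directSumG S T) :
    directSumG S (-T) ∧
      covG (S + T) = covG (S + -T) ∧
      (¬ sameClassG (S + T) (S + -T) ↔ ¬ centSymG S ∧ ¬ centSymG T) := by
  -- Part 1: directness of S ⊕ (-T)
  have hdir' : directSumG S (-T) := by
    intro s hs s' hs' t ht t' ht' hEq
    have ht2 : -t ∈ T := Set.mem_neg.mp ht
    have ht2' : -t' ∈ T := Set.mem_neg.mp ht'
    have key : s + -t' = s' + -t := by linear_combination hEq
    obtain ⟨h1, h2⟩ := hdir s hs s' hs' (-t') ht2' (-t) ht2 key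
    exact ⟨h1, by linear_combination h2⟩
  -- negated set facts
  have hnegfin : (-T).Finite := by
    have : -T = (fun x => -x) '' T := by
      ext x; simp only [Set.mem_neg, Set.mem_image]
      constructor
      · intro h; exact ⟨-x, h, by ring⟩
      · rintro ⟨y, hy, rfl⟩; simpa using hy
    rw [this]; exact hTfin.image _
  have hnegne : (-T).Nonempty := by
    obtain ⟨τ, hτ⟩ := hTne
    exact ⟨-τ, Set.neg_mem_neg.mpr hτ⟩
  -- representation choice functions for K = S + T
  have hrepK : ∀ x : Fin d → ℤ, ∃ p : (Fin d → ℤ) × (Fin d → ℤ),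
      x ∈ S + T → p.1 ∈ S ∧ p.2 ∈ T ∧ p.1 + p.2 = x := by
    intro x
    by_cases hx : x ∈ S + T
    · obtain ⟨s, hs, t, ht, hst⟩ := Set.mem_add.mp hx
      exact ⟨(s, t), fun _ => ⟨hs, ht, hst⟩⟩
    · exact ⟨(0, 0), fun h => absurd h hx⟩
  choose repK hK using hrepK
  -- representation choice functions for L = S + (-T), in the form s - t
  have hrepL : ∀ x : Fin d → ℤ, ∃ p : (Fin d → ℤ) × (Fin d → ℤ),
      x ∈ S + -T → p.1 ∈ S ∧ p.2 ∈ T ∧ p.1 - p.2 = x := by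
    intro x
    by_cases hx : x ∈ S + -T
    · obtain ⟨s, hs, t, ht, hst⟩ := Set.mem_add.mp hx
      exact ⟨(s, -t), fun _ => ⟨hs, Set.mem_neg.mp ht, by linear_combination hst⟩⟩
    · exact ⟨(0, 0), fun h => absurd h hx⟩
  choose repL hL using hrepL
  -- uniqueness of representations
  have uniqK : ∀ {x s t : Fin d → ℤ}, s ∈ S → t ∈ T → s + t = x →
      (repK x).1 = s ∧ (repK x).2 = t := by
    intro x s t hs ht hst
    have hx : x ∈ S + T := by rw [← hst]; exact Set.add_mem_add hs ht
    obtain ⟨h1, h2, h3⟩ := hK x hx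
    exact hdir _ h1 _ hs _ h2 _ ht (by rw [h3, hst])
  -- Part 2: covariogram equality
  have hcov : covG (S + T) = covG (S + -T) := by
    funext u
    simp only [covG]
    have memK : ∀ {x : Fin d → ℤ}, x ∈ (fun y => y + u) '' (S + T) ↔ x - u ∈ S + T := by
      intro x
      constructor
      · rintro ⟨k, hk, rfl⟩; simpa using hk
      · intro h; exact ⟨x - u, h, by ring⟩
    have memL : ∀ {x : Fin d → ℤ}, x ∈ (fun y => y + u) '' (S + -T) ↔ x - u ∈ S + -T := by
      intro x
      constructor
      · rintro ⟨k, hk, rfl⟩; simpa using hk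
      · intro h; exact ⟨x - u, h, by ring⟩
    have hbij : Set.BijOn (fun x => (repK x).1 - (repK (x - u)).2)
        ((S + T) ∩ ((fun y => y + u) '' (S + T)))
        ((S + -T) ∩ ((fun y => y + u) '' (S + -T))) := by
      constructor
      · -- MapsTo
        intro x hx
        obtain ⟨e1s, e1t, e1⟩ := hK x hx.1
        obtain ⟨e2s, e2t, e2⟩ := hK (x - u) (memK.mp hx.2)
        have h1 : (repK x).1 - (repK (x - u)).2 ∈ S + -T := by
          have : (repK x).1 + -(repK (x - u)).2 ∈ S + -T :=
            Set.add_mem_add e1s (Set.neg_mem_neg.mpr e2t)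
          simpa [sub_eq_add_neg] using this
        have h2 : (repK x).1 - (repK (x - u)).2 - u ∈ S + -T := by
          have heq : (repK x).1 - (repK (x - u)).2 - u = (repK (x - u)).1 + -(repK x).2 := by
            linear_combination e1 - e2
          rw [heq]
          exact Set.add_mem_add e2s (Set.neg_mem_neg.mpr e1t)
        exact ⟨h1, memL.mpr h2⟩
      constructor
      · -- InjOn
        intro x hx y hy hfeq
        simp only at hfeq
        obtain ⟨x1s, x1t, x1⟩ := hK x hx.1
        obtain ⟨x2s, x2t, x2⟩ := hK (x - u) (memK.mp hx.2)
        obtain ⟨y1s, y1t, y1⟩ := hK y hy.1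
        obtain ⟨y2s, y2t, y2⟩ := hK (y - u) (memK.mp hy.2)
        have h1 : (repK x).1 + -(repK (x - u)).2 = (repK y).1 + -(repK (y - u)).2 := by
          linear_combination hfeq
        obtain ⟨es, et⟩ := hdir' _ x1s _ y1s _ (Set.neg_mem_neg.mpr x2t)
          _ (Set.neg_mem_neg.mpr y2t) h1
        have h2 : (repK (x - u)).1 + -(repK x).2 = (repK (y - u)).1 + -(repK y).2 := by
          linear_combination hfeq - (x1 - x2) + (y1 - y2)
        obtain ⟨es2, et2⟩ := hdir' _ x2s _ y2s _ (Set.neg_mem_neg.mpr x1t)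
          _ (Set.neg_mem_neg.mpr y1t) h2
        calc x = (repK x).1 + (repK x).2 := x1.symm
          _ = (repK y).1 + (repK y).2 := by rw [es]; congr 1; linear_combination -et2
          _ = y := y1
      · -- SurjOn
        intro z hz
        obtain ⟨g1s, g1t, g1⟩ := hL z hz.1
        obtain ⟨g2s, g2t, g2⟩ := hL (z - u) (memL.mp hz.2)
        have hxu : (repL z).1 + (repL (z - u)).2 - u = (repL (z - u)).1 + (repL z).2 := by
          linear_combination g1 - g2
        refine ⟨(repL z).1 + (repL (z - u)).2, ⟨Set.add_mem_add g1s g2t, ?_⟩, ?_⟩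
        · refine memK.mpr ?_
          rw [hxu]
          exact Set.add_mem_add g2s g1t
        · obtain ⟨u1, u2⟩ := uniqK g1s g2t rfl
          obtain ⟨u3, u4⟩ := uniqK g2s g1t hxu.symm
          show (repK ((repL z).1 + (repL (z - u)).2)).1
              - (repK ((repL z).1 + (repL (z - u)).2 - u)).2 = z
          rw [u1, u4]
          exact g1
    calc ((S + T) ∩ ((fun y => y + u) '' (S + T))).ncard
        = ((fun x => (repK x).1 - (repK (x - u)).2) ''
            ((S + T) ∩ ((fun y => y + u) '' (S + T)))).ncard :=
          (Set.ncard_image_of_injOn hbij.injOn).symm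
      _ = ((S + -T) ∩ ((fun y => y + u) '' (S + -T))).ncard := by rw [hbij.image_eq]
  -- Part 3
  have hiff : sameClassG (S + T) (S + -T) ↔ (centSymG S ∨ centSymG T) := by
    constructor
    · rintro ⟨t, hcase | hcase⟩
      · -- translate case: T is centrally symmetric
        right
        have himg : (fun x => x + t) '' (S + T) = S + ((fun x => x + t) '' T) := by
          ext z
          simp only [Set.mem_image, Set.mem_add]
          constructor
          · rintro ⟨w, ⟨s, hs, v, hv, rfl⟩, rfl⟩
            exact ⟨s, hs, v + t, ⟨v, hv, rfl⟩, by ring⟩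
          · rintro ⟨s, hs, w, ⟨v, hv, rfl⟩, rfl⟩
            exact ⟨s + v, ⟨s, hs, v, hv, rfl⟩, by ring⟩
        have hdB : directSumG S ((fun x => x + t) '' T) := by
          rintro s hs s' hs' w ⟨v, hv, rfl⟩ w' ⟨v', hv', rfl⟩ hEq
          have : s + v = s' + v' := by linear_combination hEq
          obtain ⟨h1, h2⟩ := hdir s hs s' hs' v hv v' hv' this
          exact ⟨h1, by rw [h2]⟩
        have hTeq : -T = (fun x => x + t) '' T :=
          cancelG hSfin hSne hnegfin (hTfin.image _) hdir' hdB (by rw [hcase, himg])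
        refine ⟨-t, ?_⟩
        ext v
        constructor
        · intro hv
          have hmem : -v ∈ -T := Set.neg_mem_neg.mpr hv
          rw [hTeq] at hmem
          obtain ⟨v₁, hv₁, he⟩ := hmem
          exact ⟨v₁, hv₁, by show -t - v₁ = v; linear_combination -he⟩
        · rintro ⟨w, hw, rfl⟩
          have hmem : w + t ∈ -T := by rw [hTeq]; exact ⟨w, hw, rfl⟩
          have : -(w + t) ∈ T := Set.mem_neg.mp hmem
          show -t - w ∈ T
          have heq : -t - w = -(w + t) := by ring
          rw [heq]; exact this
      · -- reflection case: S is centrally symmetric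
        left
        have himg2 : (fun x => t - x) '' (S + T) = -T + ((fun x => t - x) '' S) := by
          ext z
          simp only [Set.mem_image, Set.mem_add]
          constructor
          · rintro ⟨w, ⟨s, hs, v, hv, rfl⟩, rfl⟩
            exact ⟨-v, Set.neg_mem_neg.mpr hv, t - s, ⟨s, hs, rfl⟩, by ring⟩
          · rintro ⟨a, ha, w, ⟨s, hs, rfl⟩, rfl⟩
            exact ⟨s + -a, ⟨s, hs, -a, Set.mem_neg.mp (by simpa using ha), rfl⟩, by ring⟩
        have hd1 : directSumG (-T) S := by
          intro a ha a' ha' s hs s' hs' hEq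
          have : s + a = s' + a' := by linear_combination hEq
          obtain ⟨h1, h2⟩ := hdir' s hs s' hs' a ha a' ha' this
          exact ⟨h2, h1⟩
        have hd2 : directSumG (-T) ((fun x => t - x) '' S) := by
          rintro a ha a' ha' w ⟨s, hs, rfl⟩ w' ⟨s', hs', rfl⟩ hEq
          have : s' + a = s + a' := by linear_combination hEq
          obtain ⟨h1, h2⟩ := hdir' s' hs' s hs a ha a' ha' this
          exact ⟨h2, by rw [h1]⟩
        have hSeq : S = (fun x => t - x) '' S :=
          cancelG hnegfin hnegne hSfin (hSfin.image _) hd1 hd2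
            (by rw [add_comm (-T) S, hcase, himg2])
        exact ⟨t, hSeq⟩
    · rintro (⟨t, hS⟩ | ⟨t, hT⟩)
      · -- S centrally symmetric ⇒ L = t - K
        refine ⟨t, Or.inr ?_⟩
        ext z
        simp only [Set.mem_image, Set.mem_add]
        constructor
        · rintro ⟨s, hs, w, hw, rfl⟩
          rw [hS] at hs
          obtain ⟨s₁, hs₁, rfl⟩ := hs
          exact ⟨s₁ + -w, ⟨s₁, hs₁, -w, Set.mem_neg.mp hw, rfl⟩, by ring⟩
        · rintro ⟨w, ⟨s, hs, v, hv, rfl⟩, rfl⟩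
          have hts : t - s ∈ S := by rw [hS]; exact ⟨s, hs, rfl⟩
          exact ⟨t - s, hts, -v, Set.neg_mem_neg.mpr hv, by ring⟩
      · -- T centrally symmetric ⇒ L = K + (-t)
        refine ⟨-t, Or.inl ?_⟩
        ext z
        simp only [Set.mem_image, Set.mem_add]
        constructor
        · rintro ⟨s, hs, w, hw, rfl⟩
          have : -w ∈ T := Set.mem_neg.mp hw
          rw [hT] at this
          obtain ⟨v, hv, he⟩ := this
          exact ⟨s + v, ⟨s, hs, v, hv, rfl⟩, by linear_combination -he⟩
        · rintro ⟨w, ⟨s, hs, v, hv, rfl⟩, rfl⟩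
          have hvt : v - t ∈ -T := by
            rw [Set.mem_neg]
            have : t - v ∈ (fun x => t - x) '' T := ⟨v, hv, rfl⟩
            rw [← hT] at this
            simpa [neg_sub] using this
          exact ⟨s, hs, v - t, hvt, by ring⟩
  refine ⟨hdir', hcov, ?_⟩
  rw [not_iff_comm, hiff]
  tauto

end
end
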